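/- arXiv:1111.3812 — 6 statements merged into one kernel-verified Lean document; each statement's English description precedes it below -/
import Mathlib

section
/- For every r∈(0,1), the function ψ is differentiable at r with derivative ψ'(r) = (π/(1−r²)) · ((1−r)/(E'(r) − rK'(r)))². -/
set_option maxHeartbeats 1000000

open Real Set Filter Topology

/-- Complete elliptic integral of the first kind. -/
noncomputable def EK (r : ℝ) : ℝ :=
  ∫ t in (0:ℝ)..(π/2), 1 / Real.sqrt (1 - r^2 * Real.sin t ^ 2)

/-- Complete elliptic integral of the second kind. -/
noncomputable def EE (r : ℝ) : ℝ :=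
  ∫ t in (0:ℝ)..(π/2), Real.sqrt (1 - r^2 * Real.sin t ^ 2)

/-- K'(r) = K(√(1-r²)). -/
noncomputable def EK' (r : ℝ) : ℝ := EK (Real.sqrt (1 - r^2))

/-- E'(r) = E(√(1-r²)). -/
noncomputable def EE' (r : ℝ) : ℝ := EE (Real.sqrt (1 - r^2))

/-- The function ψ. -/
noncomputable def psi (r : ℝ) : ℝ :=
  2 * (EE r - (1 - r) * EK r) / (EE' r - r * EK' r)

open intervalIntegral MeasureTheory

lemma upos {k : ℝ} (hk : k^2 < 1) (t : ℝ) : 0 < 1 - k^2 * Real.sin t ^ 2 := by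
  nlinarith [Real.sin_sq_le_one t, sq_nonneg k, sq_nonneg (k * Real.sin t)]

lemma ule {k : ℝ} (t : ℝ) : 1 - k^2 * Real.sin t ^ 2 ≤ 1 := by
  nlinarith [sq_nonneg (k * Real.sin t)]

lemma uge {k : ℝ} (t : ℝ) : 1 - k^2 ≤ 1 - k^2 * Real.sin t ^ 2 := by
  nlinarith [Real.sin_sq_le_one t, sq_nonneg k]

lemma spos {k : ℝ} (hk : k^2 < 1) (t : ℝ) : 0 < Real.sqrt (1 - k^2 * Real.sin t ^ 2) :=
  Real.sqrt_pos.2 (upos hk t)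

lemma contE {k : ℝ} : Continuous fun t => Real.sqrt (1 - k^2 * Real.sin t ^ 2) := by
  continuity

lemma contK {k : ℝ} (hk : k^2 < 1) :
    Continuous fun t => 1 / Real.sqrt (1 - k^2 * Real.sin t ^ 2) := by
  apply Continuous.div continuous_const contE
  intro t; exact (spos hk t).ne'

lemma cont3 {k : ℝ} (hk : k^2 < 1) :
    Continuous fun t => 1 / Real.sqrt (1 - k^2 * Real.sin t ^ 2) ^ 3 := by
  apply Continuous.div continuous_const (contE.pow 3)
  intro t; exact pow_ne_zero _ (spos hk t).ne'

lemma hasDerivAt_sqrtu {x : ℝ} (hx : x^2 < 1) (t : ℝ) :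
    HasDerivAt (fun x => Real.sqrt (1 - x^2 * Real.sin t ^ 2))
      (-(x * Real.sin t ^ 2) / Real.sqrt (1 - x^2 * Real.sin t ^ 2)) x := by
  have hu : HasDerivAt (fun x : ℝ => 1 - x^2 * Real.sin t ^ 2)
      (-(2 * x * Real.sin t ^ 2)) x := by
    simpa using ((hasDerivAt_pow 2 x).mul_const (Real.sin t ^ 2)).const_sub 1
  have h := (Real.hasDerivAt_sqrt (ne_of_gt (upos hx t))).comp x hu
  refine h.congr_deriv ?_
  symm
  have := spos hx t
  field_simp

lemma hasDerivAt_invsqrtu {x : ℝ} (hx : x^2 < 1) (t : ℝ) :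
    HasDerivAt (fun x => 1 / Real.sqrt (1 - x^2 * Real.sin t ^ 2))
      (x * Real.sin t ^ 2 / Real.sqrt (1 - x^2 * Real.sin t ^ 2) ^ 3) x := by
  have h := ((hasDerivAt_const x (1:ℝ)).div (hasDerivAt_sqrtu hx t) (spos hx t).ne')
  refine h.congr_deriv ?_
  symm
  have h1 := spos hx t
  have h2 : Real.sqrt (1 - x^2 * Real.sin t ^ 2) ^ 2 = 1 - x^2 * Real.sin t ^ 2 :=
    Real.sq_sqrt (upos hx t).le
  field_simp
  ring_nf

lemma ball_sq_lt {k x : ℝ} (hk0 : 0 < k) (hk1 : k < 1)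
    (hx : x ∈ Metric.ball k ((1-k)/2)) : x^2 < ((1+k)/2)^2 ∧ ((1+k)/2)^2 < 1 := by
  rw [Metric.mem_ball, Real.dist_eq, abs_lt] at hx
  constructor
  · have h1 : x < (1+k)/2 := by linarith [hx.2]
    have h2 : -((1+k)/2) < x := by linarith [hx.1]
    exact sq_lt_sq' h2 h1
  · nlinarith

lemma hasDerivAt_EE {k : ℝ} (hk0 : 0 < k) (hk1 : k < 1) :
    HasDerivAt EE ((EE k - EK k) / k) k := by
  have hb2 : ((1+k)/2)^2 < 1 := by nlinarith
  have hε : (0:ℝ) < (1-k)/2 := by linarith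
  have hk2 : k^2 < 1 := by nlinarith
  have hcont' : Continuous fun t => -(k * Real.sin t ^ 2) / Real.sqrt (1 - k^2 * Real.sin t ^ 2) :=
    Continuous.div (by continuity) contE fun t => (spos hk2 t).ne'
  have key := intervalIntegral.hasDerivAt_integral_of_dominated_loc_of_deriv_le (μ := volume)
    (a := (0:ℝ)) (b := π/2)
    (F := fun x t => Real.sqrt (1 - x^2 * Real.sin t ^ 2))
    (F' := fun x t => -(x * Real.sin t ^ 2) / Real.sqrt (1 - x^2 * Real.sin t ^ 2))
    (x₀ := k) (bound := fun _ => (1+k)/2 / Real.sqrt (1 - ((1+k)/2)^2)) (Metric.ball_mem_nhds k hε)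
    (Eventually.of_forall fun x => contE.aestronglyMeasurable.restrict)
    (contE.intervalIntegrable 0 (π/2))
    hcont'.aestronglyMeasurable.restrict
    ?_ intervalIntegrable_const ?_
  · have hkey := key.2
    have heq : (∫ t in (0:ℝ)..(π/2),
        -(k * Real.sin t ^ 2) / Real.sqrt (1 - k^2 * Real.sin t ^ 2))
        = (EE k - EK k) / k := by
      have hcong : ∀ t : ℝ, -(k * Real.sin t ^ 2) / Real.sqrt (1 - k^2 * Real.sin t ^ 2)
          = k⁻¹ * (Real.sqrt (1 - k^2 * Real.sin t ^ 2)
              - 1 / Real.sqrt (1 - k^2 * Real.sin t ^ 2)) := by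
        intro t
        have h1 := spos hk2 t
        have h2 : Real.sqrt (1 - k^2 * Real.sin t ^ 2) ^ 2 = 1 - k^2 * Real.sin t ^ 2 :=
          Real.sq_sqrt (upos hk2 t).le
        field_simp
        nlinarith [h2]
      rw [intervalIntegral.integral_congr (fun t _ => hcong t),
        intervalIntegral.integral_const_mul,
        intervalIntegral.integral_sub (contE.intervalIntegrable 0 (π/2))
          ((contK hk2).intervalIntegrable 0 (π/2))]
      rw [EE, EK]; field_simp
    rwa [heq] at hkey
  · refine Eventually.of_forall fun t _ x hx => ?_
    obtain ⟨hx1, _⟩ := ball_sq_lt hk0 hk1 hx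
    have hxb : x^2 < 1 := lt_trans hx1 hb2
    have h1 := spos hxb t
    have hbpos : (0:ℝ) < (1+k)/2 := by linarith
    rw [norm_div, Real.norm_eq_abs, Real.norm_eq_abs, abs_of_pos h1, abs_neg, abs_mul,
      abs_of_nonneg (sq_nonneg (Real.sin t))]
    apply div_le_div₀ (le_of_lt (by positivity))
    · have hxle : |x| ≤ (1+k)/2 := by nlinarith [abs_nonneg x, sq_abs x]
      nlinarith [abs_nonneg x, Real.sin_sq_le_one t, sq_nonneg (Real.sin t)]
    · exact Real.sqrt_pos.2 (by linarith)
    · apply Real.sqrt_le_sqrt; nlinarith [Real.sin_sq_le_one t, sq_nonneg x]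
  · exact Eventually.of_forall fun t _ x hx =>
      hasDerivAt_sqrtu (lt_trans (ball_sq_lt hk0 hk1 hx).1 hb2) t

lemma ftc_aux {k : ℝ} (hk2 : k^2 < 1) (t : ℝ) :
    HasDerivAt (fun t => k^2 * (Real.sin t * Real.cos t / Real.sqrt (1 - k^2 * Real.sin t ^ 2)))
      (Real.sqrt (1 - k^2 * Real.sin t ^ 2)
        - (1 - k^2) * (1 / Real.sqrt (1 - k^2 * Real.sin t ^ 2) ^ 3)) t := by
  have h1 : HasDerivAt (fun t => Real.sin t * Real.cos t)
      (Real.cos t * Real.cos t + Real.sin t * -Real.sin t) t :=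
    (Real.hasDerivAt_sin t).mul (Real.hasDerivAt_cos t)
  have hu : HasDerivAt (fun t => 1 - k^2 * Real.sin t ^ 2)
      (-(k^2 * (2 * Real.sin t ^ 1 * Real.cos t))) t := by
    exact (((Real.hasDerivAt_sin t).pow 2).const_mul (k^2)).const_sub 1
  have h3 := (Real.hasDerivAt_sqrt (ne_of_gt (upos hk2 t))).comp t hu
  have h4 := ((h1.div h3 (spos hk2 t).ne').const_mul (k^2))
  refine h4.congr_deriv ?_
  symm
  have h5 := spos hk2 t
  have hs : Real.sqrt (1 - k^2 * Real.sin t ^ 2) ^ 2 = 1 - k^2 * Real.sin t ^ 2 :=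
    Real.sq_sqrt (upos hk2 t).le
  have hcos : Real.cos t ^ 2 = 1 - Real.sin t ^ 2 := Real.cos_sq' t
  simp only [Function.comp_apply]
  field_simp
  linear_combination (Real.sqrt (1 - k^2 * Real.sin t ^ 2) ^ 2 + (1 - k^2 * Real.sin t ^ 2)
      - k^2 * (Real.cos t ^ 2 - Real.sin t ^ 2)) * hs - k^2 * hcos

lemma integral_inv3 {k : ℝ} (hk2 : k^2 < 1) :
    (∫ t in (0:ℝ)..(π/2), 1 / Real.sqrt (1 - k^2 * Real.sin t ^ 2) ^ 3)
      = EE k / (1 - k^2) := by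
  have hne : (1:ℝ) - k^2 ≠ 0 := by nlinarith
  have h := intervalIntegral.integral_eq_sub_of_hasDerivAt
    (f := fun t => k^2 * (Real.sin t * Real.cos t / Real.sqrt (1 - k^2 * Real.sin t ^ 2)))
    (f' := fun t => Real.sqrt (1 - k^2 * Real.sin t ^ 2)
      - (1 - k^2) * (1 / Real.sqrt (1 - k^2 * Real.sin t ^ 2) ^ 3))
    (fun t _ => ftc_aux hk2 t)
    ((contE.sub (continuous_const.mul (cont3 hk2))).intervalIntegrable 0 (π/2))
  rw [intervalIntegral.integral_sub (g := fun t => (1 - k^2) * (1 / Real.sqrt (1 - k^2 * Real.sin t ^ 2) ^ 3)) (contE.intervalIntegrable 0 (π/2))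
      ((continuous_const.mul (cont3 hk2)).intervalIntegrable 0 (π/2)),
    intervalIntegral.integral_const_mul] at h
  simp [Real.cos_pi_div_two, Real.sin_zero] at h
  rw [eq_div_iff hne]
  rw [← EE] at h
  simp only [one_div] at h ⊢
  linarith [h]

lemma hasDerivAt_EK {k : ℝ} (hk0 : 0 < k) (hk1 : k < 1) :
    HasDerivAt EK ((EE k / (1 - k^2) - EK k) / k) k := by
  have hb2 : ((1+k)/2)^2 < 1 := by nlinarith
  have hε : (0:ℝ) < (1-k)/2 := by linarith
  have hk2 : k^2 < 1 := by nlinarith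
  have hcont' : Continuous fun t => k * Real.sin t ^ 2 / Real.sqrt (1 - k^2 * Real.sin t ^ 2) ^ 3 :=
    Continuous.div (by continuity) (contE.pow 3) fun t => pow_ne_zero _ (spos hk2 t).ne'
  have key := intervalIntegral.hasDerivAt_integral_of_dominated_loc_of_deriv_le (μ := volume)
    (a := (0:ℝ)) (b := π/2)
    (F := fun x t => 1 / Real.sqrt (1 - x^2 * Real.sin t ^ 2))
    (F' := fun x t => x * Real.sin t ^ 2 / Real.sqrt (1 - x^2 * Real.sin t ^ 2) ^ 3)
    (x₀ := k) (bound := fun _ => (1+k)/2 / Real.sqrt (1 - ((1+k)/2)^2) ^ 3) (Metric.ball_mem_nhds k hε)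
    (eventually_of_mem (Metric.ball_mem_nhds k hε) fun x hx =>
      (contK (lt_trans (ball_sq_lt hk0 hk1 hx).1 hb2)).aestronglyMeasurable.restrict)
    ((contK hk2).intervalIntegrable 0 (π/2))
    hcont'.aestronglyMeasurable.restrict
    ?_ intervalIntegrable_const ?_
  · have hkey := key.2
    have heq : (∫ t in (0:ℝ)..(π/2),
        k * Real.sin t ^ 2 / Real.sqrt (1 - k^2 * Real.sin t ^ 2) ^ 3)
        = (EE k / (1 - k^2) - EK k) / k := by
      have hcong : ∀ t : ℝ, k * Real.sin t ^ 2 / Real.sqrt (1 - k^2 * Real.sin t ^ 2) ^ 3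
          = k⁻¹ * (1 / Real.sqrt (1 - k^2 * Real.sin t ^ 2) ^ 3
              - 1 / Real.sqrt (1 - k^2 * Real.sin t ^ 2)) := by
        intro t
        have h1 := spos hk2 t
        have h2 : Real.sqrt (1 - k^2 * Real.sin t ^ 2) ^ 2 = 1 - k^2 * Real.sin t ^ 2 :=
          Real.sq_sqrt (upos hk2 t).le
        field_simp
        linear_combination h2
      rw [intervalIntegral.integral_congr (fun t _ => hcong t),
        intervalIntegral.integral_const_mul,
        intervalIntegral.integral_sub ((cont3 hk2).intervalIntegrable 0 (π/2))
          ((contK hk2).intervalIntegrable 0 (π/2)),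
        integral_inv3 hk2, ← EK]
      field_simp
    rwa [heq] at hkey
  · refine Eventually.of_forall fun t _ x hx => ?_
    obtain ⟨hx1, _⟩ := ball_sq_lt hk0 hk1 hx
    have hxb : x^2 < 1 := lt_trans hx1 hb2
    have h1 := spos hxb t
    have hbpos : (0:ℝ) < (1+k)/2 := by linarith
    have hsb : (0:ℝ) < Real.sqrt (1 - ((1+k)/2)^2) := Real.sqrt_pos.2 (by linarith)
    rw [norm_div, Real.norm_eq_abs, Real.norm_eq_abs, abs_of_pos (by positivity :
        (0:ℝ) < Real.sqrt (1 - x^2 * Real.sin t ^ 2) ^ 3), abs_mul,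
      abs_of_nonneg (sq_nonneg (Real.sin t))]
    apply div_le_div₀ (le_of_lt (by positivity))
    · have hxle : |x| ≤ (1+k)/2 := by nlinarith [abs_nonneg x, sq_abs x]
      nlinarith [abs_nonneg x, Real.sin_sq_le_one t, sq_nonneg (Real.sin t)]
    · positivity
    · apply pow_le_pow_left₀ hsb.le
      apply Real.sqrt_le_sqrt; nlinarith [Real.sin_sq_le_one t, sq_nonneg x]
  · exact Eventually.of_forall fun t _ x hx =>
      hasDerivAt_invsqrtu (lt_trans (ball_sq_lt hk0 hk1 hx).1 hb2) t



lemma k'_facts {r : ℝ} (h0 : 0 < r) (h1 : r < 1) :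
    0 < Real.sqrt (1 - r^2) ∧ Real.sqrt (1 - r^2) < 1 ∧ Real.sqrt (1 - r^2) ^ 2 = 1 - r^2 := by
  have h2 : (0:ℝ) < 1 - r^2 := by nlinarith
  refine ⟨Real.sqrt_pos.2 h2, ?_, Real.sq_sqrt h2.le⟩
  exact (Real.sqrt_lt' one_pos).2 (by nlinarith)

lemma hasDerivAt_k' {r : ℝ} (h0 : 0 < r) (h1 : r < 1) :
    HasDerivAt (fun x => Real.sqrt (1 - x^2)) (-r / Real.sqrt (1 - r^2)) r := by
  have h2 : (0:ℝ) < 1 - r^2 := by nlinarith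
  have hu : HasDerivAt (fun x : ℝ => 1 - x^2) (-(2*r)) r := by
    simpa using (hasDerivAt_pow 2 r).const_sub 1
  have h := (Real.hasDerivAt_sqrt h2.ne').comp r hu
  refine h.congr_deriv ?_
  symm
  have := Real.sqrt_pos.2 h2
  field_simp

lemma hasDerivAt_EE' {r : ℝ} (h0 : 0 < r) (h1 : r < 1) :
    HasDerivAt EE' (-(r * (EE' r - EK' r)) / (1 - r^2)) r := by
  obtain ⟨hK0, hK1, hK2⟩ := k'_facts h0 h1
  have h := (hasDerivAt_EE hK0 hK1).comp r (hasDerivAt_k' h0 h1)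
  refine h.congr_deriv ?_
  symm
  simp only [EE', EK']
  rw [← hK2]
  field_simp
  rw [Real.sq_sqrt (sq_nonneg _)]
  ring

lemma hasDerivAt_EK' {r : ℝ} (h0 : 0 < r) (h1 : r < 1) :
    HasDerivAt EK' (-(EE' r - r^2 * EK' r) / (r * (1 - r^2))) r := by
  obtain ⟨hK0, hK1, hK2⟩ := k'_facts h0 h1
  have h := (hasDerivAt_EK hK0 hK1).comp r (hasDerivAt_k' h0 h1)
  refine h.congr_deriv ?_
  symm
  simp only [EE', EK']
  rw [show 1 - Real.sqrt (1 - r^2) ^ 2 = r^2 by rw [hK2]; ring, ← hK2]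
  have hr2 : (0:ℝ) < 1 - r^2 := by nlinarith
  field_simp
  rw [Real.sq_sqrt (sq_nonneg _)]
  ring

lemma pihalf_pos : (0:ℝ) < π/2 := by positivity

lemma integral_one_pi : (∫ t in (0:ℝ)..(π/2), (1:ℝ)) = π/2 := by simp

lemma integral_const_pi (c : ℝ) : (∫ t in (0:ℝ)..(π/2), c) = (π/2) * c := by
  simp [smul_eq_mul]

lemma EK_ge {k : ℝ} (hk2 : k^2 < 1) : π/2 ≤ EK k := by
  rw [← integral_one_pi, EK]
  apply intervalIntegral.integral_mono_on pihalf_pos.le (intervalIntegrable_const)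
    ((contK hk2).intervalIntegrable 0 (π/2))
  intro t _
  rw [le_div_iff₀ (spos hk2 t)]
  simpa using Real.sqrt_le_one.2 (ule (k:=k) t)

lemma EK_le {k : ℝ} (hk2 : k^2 < 1) : EK k ≤ (π/2) / Real.sqrt (1 - k^2) := by
  have hc : (0:ℝ) < Real.sqrt (1 - k^2) := Real.sqrt_pos.2 (by nlinarith)
  have h : EK k ≤ (π/2) * (1 / Real.sqrt (1 - k^2)) := by
    rw [← integral_const_pi, EK]
    apply intervalIntegral.integral_mono_on pihalf_pos.le
      ((contK hk2).intervalIntegrable 0 (π/2)) intervalIntegrable_const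
    intro t _
    apply one_div_le_one_div_of_le hc
    exact Real.sqrt_le_sqrt (uge t)
  linarith [h, (div_eq_mul_one_div (π/2) (Real.sqrt (1-k^2))).symm]

lemma EE_le {k : ℝ} : EE k ≤ π/2 := by
  rw [← integral_one_pi, EE]
  apply intervalIntegral.integral_mono_on pihalf_pos.le
    (contE.intervalIntegrable 0 (π/2)) intervalIntegrable_const
  intro t _
  exact Real.sqrt_le_one.2 (ule t)

lemma EE_ge_sqrt {k : ℝ} : (π/2) * Real.sqrt (1 - k^2) ≤ EE k := by
  rw [← integral_const_pi, EE]
  apply intervalIntegral.integral_mono_on pihalf_pos.le intervalIntegrable_const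
    (contE.intervalIntegrable 0 (π/2))
  intro t _
  exact Real.sqrt_le_sqrt (uge t)

lemma EE_ge_one {k : ℝ} (hk2 : k^2 ≤ 1) : 1 ≤ EE k := by
  have h1 : (∫ t in (0:ℝ)..(π/2), Real.cos t) = 1 := by
    rw [integral_cos]; simp
  rw [← h1, EE]
  apply intervalIntegral.integral_mono_on pihalf_pos.le
    (Real.continuous_cos.intervalIntegrable 0 (π/2)) (contE.intervalIntegrable 0 (π/2))
  intro t ht
  have hc : 0 ≤ Real.cos t := Real.cos_nonneg_of_mem_Icc ⟨by linarith [ht.1, pi_pos], ht.2⟩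
  rw [show Real.cos t = Real.sqrt (Real.cos t ^ 2) by rw [Real.sqrt_sq hc]]
  apply Real.sqrt_le_sqrt
  have := Real.sin_sq_add_cos_sq t
  nlinarith [sq_nonneg (Real.sin t)]

lemma EE_le_one_add {k : ℝ} (hk2 : k^2 ≤ 1) : EE k ≤ 1 + (π/2) * Real.sqrt (1 - k^2) := by
  set c := Real.sqrt (1 - k^2) with hc
  have hc0 : 0 ≤ c := Real.sqrt_nonneg _
  have hc2 : c^2 = 1 - k^2 := Real.sq_sqrt (by nlinarith)
  have h1 : (∫ t in (0:ℝ)..(π/2), (Real.cos t + c)) = 1 + (π/2) * c := by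
    rw [intervalIntegral.integral_add (Real.continuous_cos.intervalIntegrable 0 (π/2))
      intervalIntegrable_const, integral_cos, integral_const_pi]
    simp
  rw [← h1, EE]
  apply intervalIntegral.integral_mono_on (g := fun t => Real.cos t + c) pihalf_pos.le (contE.intervalIntegrable 0 (π/2))
    ((Real.continuous_cos.add continuous_const).intervalIntegrable 0 (π/2))
  intro t ht
  have hcos : 0 ≤ Real.cos t := Real.cos_nonneg_of_mem_Icc ⟨by linarith [ht.1, pi_pos], ht.2⟩
  rw [show Real.cos t + c = Real.sqrt ((Real.cos t + c)^2) by
    rw [Real.sqrt_sq (by positivity)]]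
  apply Real.sqrt_le_sqrt
  have := Real.sin_sq_add_cos_sq t
  nlinarith [sq_nonneg (Real.sin t), mul_nonneg hcos hc0, Real.sin_sq_le_one t]

lemma EE_le_EK {k : ℝ} (hk2 : k^2 < 1) : EE k ≤ EK k := by
  rw [EE, EK]
  apply intervalIntegral.integral_mono_on pihalf_pos.le (contE.intervalIntegrable 0 (π/2))
    ((contK hk2).intervalIntegrable 0 (π/2))
  intro t _
  rw [le_div_iff₀ (spos hk2 t), Real.mul_self_sqrt (upos hk2 t).le]
  exact ule t

lemma EK_sub_EE_le {k : ℝ} (hk2 : k^2 < 1) :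
    EK k - EE k ≤ (π/2) * (k^2 / Real.sqrt (1 - k^2)) := by
  have hc : (0:ℝ) < Real.sqrt (1 - k^2) := Real.sqrt_pos.2 (by nlinarith)
  rw [EK, EE, ← intervalIntegral.integral_sub ((contK hk2).intervalIntegrable 0 (π/2))
    (contE.intervalIntegrable 0 (π/2)), ← integral_const_pi]
  apply intervalIntegral.integral_mono_on (f := fun t => 1 / Real.sqrt (1 - k^2 * Real.sin t ^ 2) - Real.sqrt (1 - k^2 * Real.sin t ^ 2)) pihalf_pos.le
    ((((contK hk2)).sub contE).intervalIntegrable 0 (π/2)) intervalIntegrable_const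
  intro t _
  have h1 := spos hk2 t
  have h2 : Real.sqrt (1 - k^2 * Real.sin t ^ 2) ^ 2 = 1 - k^2 * Real.sin t ^ 2 :=
    Real.sq_sqrt (upos hk2 t).le
  have heq : 1 / Real.sqrt (1 - k^2 * Real.sin t ^ 2) - Real.sqrt (1 - k^2 * Real.sin t ^ 2)
      = (k^2 * Real.sin t ^ 2) / Real.sqrt (1 - k^2 * Real.sin t ^ 2) := by
    field_simp
    linarith [h2]
  rw [heq]
  apply div_le_div₀ (sq_nonneg k) (by nlinarith [Real.sin_sq_le_one t, sq_nonneg k]) hc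
  exact Real.sqrt_le_sqrt (uge t)

lemma EE_lt_EK {k : ℝ} (h0 : 0 < k) (h1 : k < 1) : EE k < EK k := by
  have hk2 : k^2 < 1 := by nlinarith
  rw [EE, EK]
  apply intervalIntegral.integral_lt_integral_of_continuousOn_of_le_of_exists_lt pihalf_pos
    contE.continuousOn (contK hk2).continuousOn
  · intro t _
    have h1' := spos hk2 t
    rw [le_div_iff₀ h1', Real.mul_self_sqrt (upos hk2 t).le]
    exact ule t
  · refine ⟨π/2, ⟨pihalf_pos.le, le_refl _⟩, ?_⟩
    have h1' := spos hk2 (π/2)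
    rw [lt_div_iff₀ h1', Real.mul_self_sqrt (upos hk2 (π/2)).le]
    rw [Real.sin_pi_div_two]
    nlinarith

noncomputable def Lfun (r : ℝ) : ℝ := EE r * EK' r + EE' r * EK r - EK r * EK' r

lemma hasDerivAt_Lfun {r : ℝ} (h0 : 0 < r) (h1 : r < 1) : HasDerivAt Lfun 0 r := by
  have hE := hasDerivAt_EE h0 h1
  have hK := hasDerivAt_EK h0 h1
  have hE' := hasDerivAt_EE' h0 h1
  have hK' := hasDerivAt_EK' h0 h1
  have h := ((hE.mul hK').add (hE'.mul hK)).sub (hK.mul hK')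
  refine h.congr_deriv ?_
  symm
  have hr2 : (0:ℝ) < 1 - r^2 := by nlinarith
  field_simp
  ring

lemma Lfun_const {x y : ℝ} (hx : x ∈ Ioo (0:ℝ) 1) (hy : y ∈ Ioo (0:ℝ) 1) :
    Lfun x = Lfun y := by
  have key : ∀ a b : ℝ, a ∈ Ioo (0:ℝ) 1 → b ∈ Ioo (0:ℝ) 1 → a < b → Lfun a = Lfun b := by
    intro a b ha hb hab
    have hcont : ContinuousOn Lfun (Icc a b) := fun z hz =>
      (hasDerivAt_Lfun (lt_of_lt_of_le ha.1 hz.1) (lt_of_le_of_lt hz.2 hb.2)).continuousAt.continuousWithinAt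
    obtain ⟨c, hc, hc2⟩ := exists_hasDerivAt_eq_slope Lfun (fun _ => 0) hab hcont
      (fun z hz => hasDerivAt_Lfun (lt_trans ha.1 hz.1) (lt_trans hz.2 hb.2))
    have hba : b - a ≠ 0 := ne_of_gt (by linarith)
    have h0 : (Lfun b - Lfun a) / (b - a) = 0 := hc2.symm
    rw [div_eq_zero_iff] at h0
    have := h0.resolve_right hba
    linarith
  rcases lt_trichotomy x y with h | h | h
  · exact key x y hx hy h
  · rw [h]
  · exact (key y x hy hx h).symm

lemma k'_sq_lt {r : ℝ} (h0 : 0 < r) (h1 : r < 1) : Real.sqrt (1 - r^2) ^ 2 < 1 := by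
  obtain ⟨_, h, _⟩ := k'_facts h0 h1
  nlinarith [Real.sqrt_nonneg (1 - r^2)]

lemma Lfun_tendsto : Tendsto Lfun (𝓝[>] (0:ℝ)) (𝓝 (π/2)) := by
  have hmem : Ioo (0:ℝ) 1 ∈ 𝓝[>] (0:ℝ) := Ioo_mem_nhdsGT_of_mem ⟨le_refl 0, zero_lt_one⟩
  have hEK : Tendsto (fun r => EK r) (𝓝[>] (0:ℝ)) (𝓝 (π/2)) := by
    have hup : Tendsto (fun r : ℝ => (π/2) / Real.sqrt (1 - r^2)) (𝓝[>] (0:ℝ)) (𝓝 (π/2)) := by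
      have : ContinuousAt (fun r : ℝ => (π/2) / Real.sqrt (1 - r^2)) 0 := by
        apply ContinuousAt.div continuousAt_const
        · exact (Real.continuous_sqrt.comp (by continuity)).continuousAt
        · simp
      simpa using this.continuousWithinAt.tendsto
    refine tendsto_of_tendsto_of_tendsto_of_le_of_le' tendsto_const_nhds hup ?_ ?_
    · filter_upwards [hmem] with r hr
      exact EK_ge (by nlinarith [hr.1, hr.2])
    · filter_upwards [hmem] with r hr
      exact EK_le (by nlinarith [hr.1, hr.2])
  have hEE' : Tendsto (fun r => EE' r) (𝓝[>] (0:ℝ)) (𝓝 1) := by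
    have hup : Tendsto (fun r : ℝ => 1 + (π/2) * r) (𝓝[>] (0:ℝ)) (𝓝 1) := by
      have : ContinuousAt (fun r : ℝ => 1 + (π/2) * r) 0 := by fun_prop
      simpa using this.continuousWithinAt.tendsto
    refine tendsto_of_tendsto_of_tendsto_of_le_of_le' tendsto_const_nhds hup ?_ ?_
    · filter_upwards [hmem] with r hr
      exact EE_ge_one (le_of_lt (k'_sq_lt hr.1 hr.2))
    · filter_upwards [hmem] with r hr
      have h := EE_le_one_add (k := Real.sqrt (1 - r^2)) (le_of_lt (k'_sq_lt hr.1 hr.2))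
      have h2 : Real.sqrt (1 - Real.sqrt (1 - r^2) ^ 2) = r := by
        rw [(k'_facts hr.1 hr.2).2.2]
        rw [show (1:ℝ) - (1 - r^2) = r^2 by ring, Real.sqrt_sq hr.1.le]
      rw [h2] at h
      exact h
  have hprod : Tendsto (fun r => EK' r * (EE r - EK r)) (𝓝[>] (0:ℝ)) (𝓝 0) := by
    have hg : Tendsto (fun r : ℝ => (π/2)^2 * (r / Real.sqrt (1 - r^2))) (𝓝[>] (0:ℝ)) (𝓝 0) := by
      have : ContinuousAt (fun r : ℝ => (π/2)^2 * (r / Real.sqrt (1 - r^2))) 0 := by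
        apply ContinuousAt.mul continuousAt_const
        apply ContinuousAt.div continuousAt_id
        · exact (Real.continuous_sqrt.comp (by continuity)).continuousAt
        · simp
      simpa using this.continuousWithinAt.tendsto
    have hneg : Tendsto (fun r : ℝ => -((π/2)^2 * (r / Real.sqrt (1 - r^2)))) (𝓝[>] (0:ℝ)) (𝓝 0) := by
      simpa using hg.neg
    refine tendsto_of_tendsto_of_tendsto_of_le_of_le' hneg tendsto_const_nhds ?_ ?_
    · filter_upwards [hmem] with r hr
      have hr2 : r^2 < 1 := by nlinarith [hr.1, hr.2]
      have hc : (0:ℝ) < Real.sqrt (1 - r^2) := Real.sqrt_pos.2 (by nlinarith)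
      have hK'le : EK' r ≤ (π/2) / r := by
        have := EK_le (k := Real.sqrt (1 - r^2)) (k'_sq_lt hr.1 hr.2)
        rw [(k'_facts hr.1 hr.2).2.2, show (1:ℝ) - (1 - r^2) = r^2 by ring,
          Real.sqrt_sq hr.1.le] at this
        exact this
      have hK'0 : 0 ≤ EK' r := le_trans pihalf_pos.le (EK_ge (k'_sq_lt hr.1 hr.2))
      have hdiff : EK r - EE r ≤ (π/2) * (r^2 / Real.sqrt (1 - r^2)) := EK_sub_EE_le hr2
      have hdiff0 : 0 ≤ EK r - EE r := by linarith [EE_le_EK hr2]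
      have hmul : EK' r * (EK r - EE r) ≤ ((π/2)/r) * ((π/2) * (r^2 / Real.sqrt (1 - r^2))) := by
        apply mul_le_mul hK'le hdiff hdiff0 (div_nonneg pihalf_pos.le hr.1.le)
      have heq : ((π/2)/r) * ((π/2) * (r^2 / Real.sqrt (1 - r^2)))
          = (π/2)^2 * (r / Real.sqrt (1 - r^2)) := by
        field_simp [hr.1.ne', hc.ne']
      rw [heq] at hmul
      nlinarith [hmul]
    · filter_upwards [hmem] with r hr
      have hr2 : r^2 < 1 := by nlinarith [hr.1, hr.2]
      have hK'0 : 0 ≤ EK' r := le_trans pihalf_pos.le (EK_ge (k'_sq_lt hr.1 hr.2))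
      have hdiff0 : 0 ≤ EK r - EE r := by linarith [EE_le_EK hr2]
      nlinarith [mul_nonneg hK'0 hdiff0]
  have hfinal : Tendsto (fun r => EK' r * (EE r - EK r) + EE' r * EK r) (𝓝[>] (0:ℝ))
      (𝓝 (0 + 1 * (π/2))) := hprod.add (hEE'.mul hEK)
  have heq : Lfun = fun r => EK' r * (EE r - EK r) + EE' r * EK r := by
    funext r; simp only [Lfun]; ring
  rw [heq]
  convert hfinal using 2
  ring

lemma legendre {r : ℝ} (hr : r ∈ Ioo (0:ℝ) 1) :
    EE r * EK' r + EE' r * EK r - EK r * EK' r = π/2 := by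
  have hmem : Ioo (0:ℝ) 1 ∈ 𝓝[>] (0:ℝ) := Ioo_mem_nhdsGT_of_mem ⟨le_refl 0, zero_lt_one⟩
  have ht : Tendsto Lfun (𝓝[>] (0:ℝ)) (𝓝 (Lfun r)) := by
    apply Tendsto.congr' _ (tendsto_const_nhds (α := ℝ) (x := Lfun r))
    filter_upwards [hmem] with x hx
    exact (Lfun_const hr hx).symm ▸ rfl
  have := tendsto_nhds_unique ht Lfun_tendsto
  simpa [Lfun] using this

noncomputable def Dfun (r : ℝ) : ℝ := EE' r - r * EK' r

lemma hasDerivAt_Dfun {r : ℝ} (h0 : 0 < r) (h1 : r < 1) :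
    HasDerivAt Dfun ((EE' r - EK' r) / (1 + r)) r := by
  have h := (hasDerivAt_EE' h0 h1).sub ((hasDerivAt_id r).mul (hasDerivAt_EK' h0 h1))
  refine h.congr_deriv ?_
  symm
  have hr2 : (0:ℝ) < 1 - r^2 := by nlinarith
  have h1r : (0:ℝ) < 1 + r := by linarith
  simp only [id]
  field_simp
  ring

lemma Dfun_anti {x y : ℝ} (hx : x ∈ Ioo (0:ℝ) 1) (hy : y ∈ Ioo (0:ℝ) 1) (hxy : x < y) :
    Dfun y < Dfun x := by
  have hcont : ContinuousOn Dfun (Icc x y) := fun z hz =>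
    (hasDerivAt_Dfun (lt_of_lt_of_le hx.1 hz.1) (lt_of_le_of_lt hz.2 hy.2)).continuousAt.continuousWithinAt
  obtain ⟨c, hc, hc2⟩ := exists_hasDerivAt_eq_slope Dfun (fun z => (EE' z - EK' z) / (1 + z))
    hxy hcont (fun z hz => hasDerivAt_Dfun (lt_trans hx.1 hz.1) (lt_trans hz.2 hy.2))
  have hc0 : 0 < c := lt_trans hx.1 hc.1
  have hc1 : c < 1 := lt_trans hc.2 hy.2
  obtain ⟨hK0, hK1, hK2⟩ := k'_facts hc0 hc1
  have hlt : EE' c - EK' c < 0 := by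
    have := EE_lt_EK hK0 hK1
    simp only [EE', EK']
    linarith
  have hslope : (Dfun y - Dfun x) / (y - x) < 0 := by
    rw [← hc2]
    exact div_neg_of_neg_of_pos hlt (by linarith)
  have hyx : 0 < y - x := by linarith
  rcases div_neg_iff.1 hslope with ⟨h1', h2'⟩ | ⟨h1', h2'⟩
  · linarith
  · linarith

lemma Dfun_tendsto : Tendsto Dfun (𝓝[<] (1:ℝ)) (𝓝 0) := by
  have hmem : Ioo (0:ℝ) 1 ∈ 𝓝[<] (1:ℝ) := Ioo_mem_nhdsLT_of_mem ⟨zero_lt_one, le_refl 1⟩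
  have hlow : Tendsto (fun r : ℝ => (π/2) * r - π/2) (𝓝[<] (1:ℝ)) (𝓝 0) := by
    have : ContinuousAt (fun r : ℝ => (π/2) * r - π/2) 1 := by fun_prop
    simpa using (ContinuousAt.continuousWithinAt (s := Iio (1:ℝ)) this).tendsto
  have hup : Tendsto (fun r : ℝ => π/2 - (π/2) * r) (𝓝[<] (1:ℝ)) (𝓝 0) := by
    have : ContinuousAt (fun r : ℝ => π/2 - (π/2) * r) 1 := by fun_prop
    simpa using (ContinuousAt.continuousWithinAt (s := Iio (1:ℝ)) this).tendsto
  refine tendsto_of_tendsto_of_tendsto_of_le_of_le' hlow hup ?_ ?_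
  · filter_upwards [hmem] with r hr
    obtain ⟨hK0, hK1, hK2⟩ := k'_facts hr.1 hr.2
    have hsq : Real.sqrt (1 - r^2) ^ 2 < 1 := k'_sq_lt hr.1 hr.2
    have hEE'ge : (π/2) * r ≤ EE' r := by
      have h := EE_ge_sqrt (k := Real.sqrt (1 - r^2))
      rw [hK2, show (1:ℝ) - (1 - r^2) = r^2 by ring, Real.sqrt_sq hr.1.le] at h
      exact h
    have hEK'le : EK' r ≤ (π/2) / r := by
      have h := EK_le (k := Real.sqrt (1 - r^2)) hsq
      rw [hK2, show (1:ℝ) - (1 - r^2) = r^2 by ring, Real.sqrt_sq hr.1.le] at h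
      exact h
    have : r * EK' r ≤ π/2 := by
      have h2 := mul_le_mul_of_nonneg_left hEK'le hr.1.le
      have h3 : r * ((π/2)/r) = π/2 := by
        field_simp
        rw [div_eq_iff hr.1.ne']
        ring
      rw [h3] at h2
      exact h2
    simp only [Dfun]
    linarith
  · filter_upwards [hmem] with r hr
    have hsq : Real.sqrt (1 - r^2) ^ 2 < 1 := k'_sq_lt hr.1 hr.2
    have hEE'le : EE' r ≤ π/2 := EE_le
    have hEK'ge : π/2 ≤ EK' r := EK_ge hsq
    have : (π/2) * r ≤ r * EK' r := by
      rw [mul_comm]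
      exact mul_le_mul_of_nonneg_left hEK'ge hr.1.le
    simp only [Dfun]
    linarith

lemma Dfun_pos {r : ℝ} (hr : r ∈ Ioo (0:ℝ) 1) : 0 < Dfun r := by
  set s := (1 + r) / 2 with hs
  have hsm : s ∈ Ioo (0:ℝ) 1 := ⟨by rw [hs]; linarith [hr.1], by rw [hs]; linarith [hr.2]⟩
  have hrs : r < s := by rw [hs]; linarith [hr.2]
  have h1 : Dfun s < Dfun r := Dfun_anti hr hsm hrs
  have h2 : 0 ≤ Dfun s := by
    apply le_of_tendsto Dfun_tendsto
    filter_upwards [Ioo_mem_nhdsLT_of_mem (⟨hsm.2, le_refl 1⟩ : (1:ℝ) ∈ Ioc s 1)] with t ht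
    exact (Dfun_anti hsm ⟨lt_trans hsm.1 ht.1, ht.2⟩ ht.1).le
  linarith


theorem psi_hasDerivAt (r : ℝ) (hr : r ∈ Ioo (0:ℝ) 1) :
    HasDerivAt psi (π / (1 - r^2) * ((1 - r) / (EE' r - r * EK' r))^2) r := by
  obtain ⟨h0, h1⟩ := hr
  have hr2 : (0:ℝ) < 1 - r^2 := by nlinarith
  have h1r : (0:ℝ) < 1 + r := by linarith
  have hD : 0 < EE' r - r * EK' r := Dfun_pos ⟨h0, h1⟩
  have hE := hasDerivAt_EE h0 h1
  have hK := hasDerivAt_EK h0 h1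
  have hNraw := ((hE.sub (((hasDerivAt_id r).const_sub 1).mul hK)).const_mul 2)
  have hN : HasDerivAt (fun x => 2 * (EE x - (1 - x) * EK x)) (2 * EE r / (1 + r)) r := by
    refine hNraw.congr_deriv ?_
    symm
    simp only [id]
    field_simp
    ring
  have hDD : HasDerivAt (fun x => EE' x - x * EK' x) ((EE' r - EK' r) / (1 + r)) r :=
    hasDerivAt_Dfun h0 h1
  have hdiv := hN.div hDD hD.ne'
  have hleg := legendre ⟨h0, h1⟩
  have hnum : 2 * EE r / (1 + r) * (EE' r - r * EK' r)
      - 2 * (EE r - (1 - r) * EK r) * ((EE' r - EK' r) / (1 + r))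
      = π * (1 - r) / (1 + r) := by
    field_simp
    linear_combination (2 * (1 - r) * (1 + r) - 2 * r * (1 - r)) * hleg
  have hval : (2 * EE r / (1 + r) * (EE' r - r * EK' r)
      - 2 * (EE r - (1 - r) * EK r) * ((EE' r - EK' r) / (1 + r))) / (EE' r - r * EK' r) ^ 2
      = π / (1 - r^2) * ((1 - r) / (EE' r - r * EK' r))^2 := by
    rw [hnum]
    field_simp
    ring
  rw [← hval]
  exact hdiv
end

section
/- For every r∈(0,1), ψ((1−r)/(1+r)) · ψ((1−r')/(1+r')) = 1, where r' = √(1−r²). -/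
open Real Set Filter Topology

namespace PsiAux

lemma delta_pos {k : ℝ} (hk1 : k^2 < 1) (t : ℝ) : 0 < 1 - k^2 * Real.sin t ^ 2 := by
  nlinarith [Real.sin_sq_le_one t, sq_nonneg k, sq_nonneg (k * Real.sin t)]

lemma cont_sqrtD {k : ℝ} : Continuous fun t => Real.sqrt (1 - k^2 * Real.sin t ^ 2) := by
  fun_prop

lemma sqrtD_pos {k : ℝ} (hk1 : k^2 < 1) (t : ℝ) :
    0 < Real.sqrt (1 - k^2 * Real.sin t ^ 2) := Real.sqrt_pos.2 (delta_pos hk1 t)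

lemma cont_invD {k : ℝ} (hk1 : k^2 < 1) :
    Continuous fun t => 1 / Real.sqrt (1 - k^2 * Real.sin t ^ 2) :=
  continuous_const.div cont_sqrtD (fun t => (sqrtD_pos hk1 t).ne')

lemma denom_pos {k : ℝ} (hk : 0 < k) (t : ℝ) : 0 < 1 + k * Real.sin t ^ 2 := by
  nlinarith [sq_nonneg (Real.sin t)]

lemma num2_pos {k : ℝ} (hk : 0 < k) (hk1 : k < 1) (t : ℝ) : 0 < 1 - k * Real.sin t ^ 2 := by
  nlinarith [Real.sin_sq_le_one t, sq_nonneg (Real.sin t)]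

noncomputable def lw (k θ : ℝ) : ℝ := (1 + k) * Real.sin θ / (1 + k * Real.sin θ ^ 2)
noncomputable def lf (k θ : ℝ) : ℝ := Real.arcsin (lw k θ)
noncomputable def lf' (k θ : ℝ) : ℝ :=
  (1 + k) * (1 - k * Real.sin θ ^ 2) /
    ((1 + k * Real.sin θ ^ 2) * Real.sqrt (1 - k^2 * Real.sin θ ^ 2))

lemma lw_nonneg {k θ : ℝ} (hk : 0 < k) (hθ : θ ∈ Icc 0 (π/2)) : 0 ≤ lw k θ := by
  have hs : 0 ≤ Real.sin θ :=
    Real.sin_nonneg_of_nonneg_of_le_pi hθ.1 (hθ.2.trans (by linarith [Real.pi_pos]))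
  exact div_nonneg (by nlinarith) (denom_pos hk θ).le

lemma lw_le_one {k θ : ℝ} (hk : 0 < k) (hk1 : k < 1) (hθ : θ ∈ Icc 0 (π/2)) : lw k θ ≤ 1 := by
  have hs : 0 ≤ Real.sin θ :=
    Real.sin_nonneg_of_nonneg_of_le_pi hθ.1 (hθ.2.trans (by linarith [Real.pi_pos]))
  have hs1 : Real.sin θ ≤ 1 := Real.sin_le_one θ
  rw [lw, div_le_one (denom_pos hk θ)]
  nlinarith [mul_nonneg (sub_nonneg.2 hs1) (show (0:ℝ) ≤ 1 - k * Real.sin θ by nlinarith)]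

lemma lw_lt_one {k θ : ℝ} (hk : 0 < k) (hk1 : k < 1) (hθ : θ ∈ Ioo 0 (π/2)) : lw k θ < 1 := by
  have hs : 0 < Real.sin θ :=
    Real.sin_pos_of_pos_of_lt_pi hθ.1 (hθ.2.trans (by linarith [Real.pi_pos]))
  have hs1 : Real.sin θ < 1 := by
    have h := Real.strictMonoOn_sin (a := θ) (b := π/2)
      ⟨by linarith [Real.pi_pos, hθ.1], hθ.2.le⟩ ⟨by linarith [Real.pi_pos], le_refl _⟩ hθ.2
    simpa using h
  rw [lw, div_lt_one (denom_pos hk θ)]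
  nlinarith [mul_pos (sub_pos.2 hs1)
    (show (0:ℝ) < 1 - k * Real.sin θ by nlinarith [Real.sin_le_one θ])]

lemma lw_pos {k θ : ℝ} (hk : 0 < k) (hθ : θ ∈ Ioo 0 (π/2)) : 0 < lw k θ := by
  have hs : 0 < Real.sin θ :=
    Real.sin_pos_of_pos_of_lt_pi hθ.1 (hθ.2.trans (by linarith [Real.pi_pos]))
  exact div_pos (by nlinarith) (denom_pos hk θ)

lemma sqrt_one_sub_lw_sq {k θ : ℝ} (hk : 0 < k) (hk1 : k^2 < 1) (hθ : θ ∈ Icc 0 (π/2)) :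
    Real.sqrt (1 - lw k θ ^ 2)
      = Real.cos θ * Real.sqrt (1 - k^2 * Real.sin θ ^ 2) / (1 + k * Real.sin θ ^ 2) := by
  have hc : 0 ≤ Real.cos θ := Real.cos_nonneg_of_mem_Icc ⟨by linarith [Real.pi_pos, hθ.1], hθ.2⟩
  have hd := (denom_pos hk θ).ne'
  rw [show 1 - lw k θ ^ 2
      = (Real.cos θ * Real.sqrt (1 - k^2 * Real.sin θ ^ 2) / (1 + k * Real.sin θ ^ 2)) ^ 2 by
    rw [div_pow, mul_pow, Real.sq_sqrt (delta_pos hk1 θ).le, lw, Real.cos_sq']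
    field_simp
    ring]
  exact Real.sqrt_sq (by positivity)

lemma sqrt_one_sub_l2w2 {k θ : ℝ} (hk : 0 < k) (hk1 : k < 1) :
    Real.sqrt (1 - (2 * Real.sqrt k / (1 + k)) ^ 2 * lw k θ ^ 2)
      = (1 - k * Real.sin θ ^ 2) / (1 + k * Real.sin θ ^ 2) := by
  have hd := (denom_pos hk θ).ne'
  have hn : 0 ≤ 1 - k * Real.sin θ ^ 2 := (num2_pos hk hk1 θ).le
  rw [show 1 - (2 * Real.sqrt k / (1 + k)) ^ 2 * lw k θ ^ 2
      = ((1 - k * Real.sin θ ^ 2) / (1 + k * Real.sin θ ^ 2)) ^ 2 by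
    rw [div_pow, mul_pow, Real.sq_sqrt hk.le, lw]
    field_simp
    ring]
  exact Real.sqrt_sq (by positivity)

lemma hasDerivAt_lf {k θ : ℝ} (hk : 0 < k) (hk1 : k < 1) (hθ : θ ∈ Ioo 0 (π/2)) :
    HasDerivAt (lf k) (lf' k θ) θ := by
  have hk2 : k^2 < 1 := by nlinarith
  have hwpos := lw_pos hk hθ
  have hwlt := lw_lt_one hk hk1 hθ
  have harc := Real.hasDerivAt_arcsin (by linarith : lw k θ ≠ -1) (ne_of_lt hwlt)
  have h2 : HasDerivAt (fun θ => 1 + k * Real.sin θ ^ 2)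
      (k * (2 * Real.sin θ ^ 1 * Real.cos θ)) θ :=
    (((Real.hasDerivAt_sin θ).pow 2).const_mul k).const_add 1
  have hw : HasDerivAt (lw k)
      ((1 + k) * Real.cos θ * (1 - k * Real.sin θ ^ 2) / (1 + k * Real.sin θ ^ 2)^2) θ := by
    have := (((Real.hasDerivAt_sin θ).const_mul (1 + k)).div h2 (denom_pos hk θ).ne')
    refine this.congr_deriv (Eq.symm ?_)
    field_simp
    ring
  have hcomp := harc.comp θ hw
  refine hcomp.congr_deriv (Eq.symm ?_)
  rw [sqrt_one_sub_lw_sq hk hk2 (Ioo_subset_Icc_self hθ)]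
  have hc : 0 < Real.cos θ := Real.cos_pos_of_mem_Ioo ⟨by linarith [Real.pi_pos, hθ.1], hθ.2⟩
  have hsq := (sqrtD_pos hk2 θ).ne'
  rw [lf']
  field_simp

lemma cont_lf {k : ℝ} (hk : 0 < k) : Continuous (lf k) := by
  unfold lf lw
  exact Real.continuous_arcsin.comp
    ((continuous_const.mul Real.continuous_sin).div
      (continuous_const.add (continuous_const.mul (Real.continuous_sin.pow 2)))
      fun t => (denom_pos hk t).ne')

lemma cont_lf' {k : ℝ} (hk : 0 < k) (hk2 : k^2 < 1) : Continuous (lf' k) := by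
  unfold lf'
  refine (continuous_const.mul
    (continuous_const.sub (continuous_const.mul (Real.continuous_sin.pow 2)))).div
    (((continuous_const.add (continuous_const.mul (Real.continuous_sin.pow 2))).mul
      (Real.continuous_sqrt.comp
        (continuous_const.sub
          (continuous_const.mul ((Real.continuous_sin.pow 2))))))) ?_
  intro t
  have h1 := denom_pos hk t
  have h2 := sqrtD_pos hk2 t
  positivity

lemma lf_zero {k : ℝ} : lf k 0 = 0 := by simp [lf, lw]

lemma lf_pi_div_two {k : ℝ} (hk : 0 < k) : lf k (π/2) = π/2 := by
  rw [lf, lw, Real.sin_pi_div_two,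
    show (1+k)*1/(1+k*1^2) = 1 by rw [one_pow, mul_one, mul_one, div_self (by linarith)]]
  exact Real.arcsin_one

lemma landen_sub {k : ℝ} (hk : 0 < k) (hk1 : k < 1) {g : ℝ → ℝ} (hg : Continuous g) :
    ∫ θ in (0:ℝ)..(π/2), lf' k θ * g (lf k θ) = ∫ u in (0:ℝ)..(π/2), g u := by
  have hk2 : k^2 < 1 := by nlinarith
  have hpi : (0:ℝ) < π/2 := by linarith [Real.pi_pos]
  have h := intervalIntegral.integral_comp_smul_deriv'' (a := 0) (b := π/2)
    (f := lf k) (f' := lf' k) (g := g)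
    ((cont_lf hk).continuousOn)
    (by
      intro x hx
      rw [min_eq_left hpi.le, max_eq_right hpi.le] at hx
      exact (hasDerivAt_lf hk hk1 hx).hasDerivWithinAt)
    ((cont_lf' hk hk2).continuousOn)
    (hg.continuousOn)
  simpa [lf_zero, lf_pi_div_two hk, smul_eq_mul, Function.comp] using h

lemma l_sq_lt_one {k : ℝ} (hk : 0 < k) (hk1 : k < 1) : (2 * Real.sqrt k / (1 + k))^2 < 1 := by
  rw [div_pow, mul_pow, Real.sq_sqrt hk.le, div_lt_one (by positivity)]
  nlinarith

lemma landen_EK {k : ℝ} (hk : 0 < k) (hk1 : k < 1) :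
    EK (2 * Real.sqrt k / (1 + k)) = (1 + k) * EK k := by
  have hk2 : k^2 < 1 := by nlinarith
  have hl2 := l_sq_lt_one hk hk1
  have hpi : (0:ℝ) < π/2 := by linarith [Real.pi_pos]
  have hgc : Continuous (fun u => 1 / Real.sqrt (1 - (2 * Real.sqrt k / (1 + k))^2 * Real.sin u ^ 2)) :=
    cont_invD hl2
  rw [EK, ← landen_sub hk hk1 hgc,
    intervalIntegral.integral_congr
      (g := fun θ => (1 + k) * (1 / Real.sqrt (1 - k^2 * Real.sin θ ^ 2))) ?_,
    intervalIntegral.integral_const_mul, EK]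
  intro θ hθ
  rw [uIcc_of_le hpi.le] at hθ
  have h1 : (-1:ℝ) ≤ lw k θ := by linarith [lw_nonneg hk hθ]
  have h2 := lw_le_one hk hk1 hθ
  simp only [lf, Real.sin_arcsin h1 h2]
  rw [sqrt_one_sub_l2w2 hk hk1, lf']
  have e1 := (num2_pos hk hk1 θ).ne'
  have e2 := (denom_pos hk θ).ne'
  have e3 := (sqrtD_pos hk2 θ).ne'
  field_simp

noncomputable def lG (k θ : ℝ) : ℝ :=
  2*k/(1+k) * (Real.sin θ * Real.cos θ * Real.sqrt (1 - k^2*Real.sin θ^2) / (1 + k*Real.sin θ^2))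

noncomputable def lGd (k θ : ℝ) : ℝ :=
  (1+k)*(1-k*Real.sin θ^2)^2/((1+k*Real.sin θ^2)^2 * Real.sqrt (1 - k^2*Real.sin θ^2))
  - (2/(1+k)) * Real.sqrt (1 - k^2*Real.sin θ^2)
  + ((1-k^2)/(1+k)) * (1 / Real.sqrt (1 - k^2*Real.sin θ^2))

lemma cont_lGd {k : ℝ} (hk : 0 < k) (hk2 : k^2 < 1) : Continuous (lGd k) := by
  unfold lGd
  have c1 : Continuous fun θ : ℝ => (1+k)*(1-k*Real.sin θ^2)^2 := by fun_prop
  have c2 : Continuous fun θ : ℝ => (1+k*Real.sin θ^2)^2 * Real.sqrt (1 - k^2*Real.sin θ^2) := by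
    fun_prop
  refine ((c1.div c2 ?_).sub (continuous_const.mul cont_sqrtD)).add
    (continuous_const.mul (cont_invD hk2))
  intro t
  have h1 := denom_pos hk t
  have h2 := sqrtD_pos hk2 t
  positivity

lemma hasDerivAt_lG {k : ℝ} (hk : 0 < k) (hk1 : k < 1) (θ : ℝ) :
    HasDerivAt (lG k) (lGd k θ) θ := by
  have hk2 : k^2 < 1 := by nlinarith
  have hΔ := delta_pos hk2 θ
  have hqpos := Real.sqrt_pos.2 hΔ
  have hdpos := denom_pos hk θ
  have hinner : HasDerivAt (fun θ => 1 - k^2 * Real.sin θ^2)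
      (-(k^2 * (2 * Real.sin θ ^ 1 * Real.cos θ))) θ :=
    (((Real.hasDerivAt_sin θ).pow 2).const_mul (k^2)).const_sub 1
  have hsqrt : HasDerivAt (fun θ => Real.sqrt (1 - k^2 * Real.sin θ^2))
      (-(k^2 * (2 * Real.sin θ ^ 1 * Real.cos θ)) / (2 * Real.sqrt (1 - k^2*Real.sin θ^2))) θ := by
    have := (Real.hasDerivAt_sqrt hΔ.ne').comp θ hinner
    refine this.congr_deriv (Eq.symm ?_)
    ring
  have hnum : HasDerivAt (fun θ => Real.sin θ * Real.cos θ * Real.sqrt (1 - k^2*Real.sin θ^2))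
      ((Real.cos θ * Real.cos θ + Real.sin θ * (-Real.sin θ)) * Real.sqrt (1 - k^2*Real.sin θ^2)
        + Real.sin θ * Real.cos θ *
          (-(k^2 * (2 * Real.sin θ ^ 1 * Real.cos θ)) / (2 * Real.sqrt (1 - k^2*Real.sin θ^2)))) θ :=
    ((Real.hasDerivAt_sin θ).mul (Real.hasDerivAt_cos θ)).mul hsqrt
  have hden : HasDerivAt (fun θ => 1 + k * Real.sin θ^2)
      (k * (2 * Real.sin θ ^ 1 * Real.cos θ)) θ :=
    (((Real.hasDerivAt_sin θ).pow 2).const_mul k).const_add 1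
  have hdiv := (hnum.div hden hdpos.ne').const_mul (2*k/(1+k))
  refine hdiv.congr_deriv (Eq.symm ?_)
  rw [lGd]
  have hq : Real.sqrt (1 - k^2*Real.sin θ^2) ^ 2 = 1 - k^2*Real.sin θ^2 := Real.sq_sqrt hΔ.le
  have hc2 : Real.cos θ ^ 2 = 1 - Real.sin θ ^ 2 := Real.cos_sq' θ
  set s := Real.sin θ
  set c := Real.cos θ
  set q := Real.sqrt (1 - k^2*s^2) with hqdef
  field_simp
  linear_combination ((-2*(1+k*s^2)^2 + 2*k*s^2*(1+k*s^2)) + (-2*k*(1+k*s^2) + 4*k^2*s^2)*c^2) * hq + (2*k^3*s^2*(1+k*s^2) + (-2*k*(1+k*s^2) + 4*k^2*s^2)*(1-k^2*s^2)) * hc2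

lemma lG_zero {k : ℝ} : lG k 0 = 0 := by simp [lG]

lemma lG_pi_div_two {k : ℝ} : lG k (π/2) = 0 := by simp [lG]

lemma landen_EE {k : ℝ} (hk : 0 < k) (hk1 : k < 1) :
    EE (2 * Real.sqrt k / (1 + k))
      = (2/(1+k)) * EE k - ((1-k^2)/(1+k)) * EK k := by
  have hk2 : k^2 < 1 := by nlinarith
  have hl2 := l_sq_lt_one hk hk1
  have hpi : (0:ℝ) < π/2 := by linarith [Real.pi_pos]
  have hgc : Continuous (fun u => Real.sqrt (1 - (2 * Real.sqrt k / (1 + k))^2 * Real.sin u ^ 2)) :=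
    cont_sqrtD
  rw [EE, ← landen_sub hk hk1 hgc,
    intervalIntegral.integral_congr
      (g := fun θ => lGd k θ + ((2/(1+k)) * Real.sqrt (1 - k^2*Real.sin θ^2)
        - ((1-k^2)/(1+k)) * (1 / Real.sqrt (1 - k^2*Real.sin θ^2)))) ?_]
  · have i1 : IntervalIntegrable (lGd k) MeasureTheory.volume 0 (π/2) :=
      (cont_lGd hk hk2).intervalIntegrable _ _
    have i2 : IntervalIntegrable (fun θ => (2/(1+k)) * Real.sqrt (1 - k^2*Real.sin θ^2))
        MeasureTheory.volume 0 (π/2) :=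
      (continuous_const.mul cont_sqrtD).intervalIntegrable _ _
    have i3 : IntervalIntegrable (fun θ => ((1-k^2)/(1+k)) * (1 / Real.sqrt (1 - k^2*Real.sin θ^2)))
        MeasureTheory.volume 0 (π/2) :=
      (continuous_const.mul (cont_invD hk2)).intervalIntegrable _ _
    rw [intervalIntegral.integral_add i1 (i2.sub i3), intervalIntegral.integral_sub i2 i3,
      intervalIntegral.integral_const_mul, intervalIntegral.integral_const_mul,
      intervalIntegral.integral_eq_sub_of_hasDerivAt
        (fun x _ => hasDerivAt_lG hk hk1 x) i1, lG_zero, lG_pi_div_two, ← EE, ← EK]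
    ring
  · intro θ hθ
    rw [uIcc_of_le hpi.le] at hθ
    have h1 : (-1:ℝ) ≤ lw k θ := by linarith [lw_nonneg hk hθ]
    have h2 := lw_le_one hk hk1 hθ
    simp only [lf, Real.sin_arcsin h1 h2]
    rw [sqrt_one_sub_l2w2 hk hk1, lf', lGd]
    have e1 := (num2_pos hk hk1 θ).ne'
    have e2 := (denom_pos hk θ).ne'
    have e3 := (sqrtD_pos hk2 θ).ne'
    field_simp
    ring

lemma C_pos {k : ℝ} (hk : 0 < k) (hk1 : k < 1) : 0 < EE k - (1 - k^2) * EK k := by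
  have hk2 : k^2 < 1 := by nlinarith
  have hpi : (0:ℝ) < π/2 := by linarith [Real.pi_pos]
  have i1 : IntervalIntegrable (fun t => Real.sqrt (1 - k^2*Real.sin t^2))
      MeasureTheory.volume 0 (π/2) := cont_sqrtD.intervalIntegrable _ _
  have i2 : IntervalIntegrable (fun t => (1-k^2) * (1 / Real.sqrt (1 - k^2*Real.sin t^2)))
      MeasureTheory.volume 0 (π/2) :=
    (continuous_const.mul (cont_invD hk2)).intervalIntegrable _ _
  rw [EE, EK, ← intervalIntegral.integral_const_mul, ← intervalIntegral.integral_sub i1 i2]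
  apply intervalIntegral.intervalIntegral_pos_of_pos_on (i1.sub i2) _ hpi
  intro x hx
  have hc : 0 < Real.cos x := Real.cos_pos_of_mem_Ioo ⟨by linarith [Real.pi_pos, hx.1], hx.2⟩
  have hq := sqrtD_pos hk2 x
  have hqq : Real.sqrt (1 - k^2*Real.sin x^2) ^ 2 = 1 - k^2*Real.sin x^2 :=
    Real.sq_sqrt (delta_pos hk2 x).le
  rw [sub_pos, mul_one_div, div_lt_iff₀ hq, Real.mul_self_sqrt (delta_pos hk2 x).le]
  have hc2 : Real.sin x ^ 2 < 1 := by nlinarith [Real.sin_sq_add_cos_sq x]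
  nlinarith [mul_pos (mul_pos hk hk) (sub_pos.2 hc2)]

lemma psi_eq {ρ : ℝ} (hρ : 0 < ρ) (hρ1 : ρ < 1) :
    psi ((1 - ρ) / (1 + ρ))
      = (EE (Real.sqrt (1 - ρ^2)) - ρ^2 * EK (Real.sqrt (1 - ρ^2)))
        / (EE ρ - (1 - ρ^2) * EK ρ) := by
  have hρp : (0:ℝ) < 1 + ρ := by linarith
  set s := (1 - ρ) / (1 + ρ) with hs
  have hs0 : 0 < s := div_pos (by linarith) hρp
  have hs1 : s < 1 := by rw [hs, div_lt_one hρp]; linarith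
  have hsp : (0:ℝ) < 1 + s := by linarith
  have hA : Real.sqrt (1 - s^2) = 2 * Real.sqrt ρ / (1 + ρ) := by
    rw [show 1 - s^2 = (2 * Real.sqrt ρ / (1 + ρ))^2 by
      rw [show (2 * Real.sqrt ρ / (1 + ρ))^2 = 4*ρ/(1+ρ)^2 by
        rw [div_pow, mul_pow, Real.sq_sqrt hρ.le]; norm_num]
      rw [hs]
      field_simp
      ring]
    exact Real.sqrt_sq (by positivity)
  have hB : 2 * Real.sqrt s / (1 + s) = Real.sqrt (1 - ρ^2) := by
    rw [show 1 - ρ^2 = (2 * Real.sqrt s / (1 + s))^2 by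
      rw [show (2 * Real.sqrt s / (1 + s))^2 = 4*s/(1+s)^2 by
        rw [div_pow, mul_pow, Real.sq_sqrt hs0.le]; norm_num]
      rw [hs]
      field_simp
      ring]
    exact (Real.sqrt_sq (by positivity)).symm
  have e1 : EK (Real.sqrt (1 - ρ^2)) = (1 + s) * EK s := by
    rw [← hB]; exact landen_EK hs0 hs1
  have e2 : EE (Real.sqrt (1 - ρ^2)) = (2/(1+s)) * EE s - ((1-s^2)/(1+s)) * EK s := by
    rw [← hB]; exact landen_EE hs0 hs1
  have e3 : EK (2 * Real.sqrt ρ / (1 + ρ)) = (1 + ρ) * EK ρ := landen_EK hρ hρ1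
  have e4 : EE (2 * Real.sqrt ρ / (1 + ρ)) = (2/(1+ρ)) * EE ρ - ((1-ρ^2)/(1+ρ)) * EK ρ :=
    landen_EE hρ hρ1
  have hCρ : EE ρ - (1 - ρ^2) * EK ρ ≠ 0 := (C_pos hρ hρ1).ne'
  rw [psi, EE', EK', hA, e3, e4, e1, e2]
  have hden : (2/(1+ρ)) * EE ρ - ((1-ρ^2)/(1+ρ)) * EK ρ - s * ((1 + ρ) * EK ρ)
      = (2/(1+ρ)) * (EE ρ - (1 - ρ^2) * EK ρ) := by
    rw [hs]; field_simp; ring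
  rw [hden, hs]
  field_simp
  ring

end PsiAux

theorem psi_identity (r : ℝ) (hr : r ∈ Ioo (0:ℝ) 1) :
    psi ((1 - r) / (1 + r)) *
      psi ((1 - Real.sqrt (1 - r^2)) / (1 + Real.sqrt (1 - r^2))) = 1 := by
  obtain ⟨hr0, hr1⟩ := hr
  have h1r2 : 0 < 1 - r^2 := by nlinarith
  set ρ' := Real.sqrt (1 - r^2) with hρ'
  have hρ'0 : 0 < ρ' := Real.sqrt_pos.2 h1r2
  have hρ'sq : ρ' ^ 2 = 1 - r^2 := Real.sq_sqrt h1r2.le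
  have hρ'1 : ρ' < 1 := by nlinarith [hρ'sq, hρ'0]
  have hrw : 1 - ρ'^2 = r^2 := by rw [hρ'sq]; ring
  have hback : Real.sqrt (1 - ρ'^2) = r := by
    rw [hrw]; exact Real.sqrt_sq hr0.le
  have p1 := PsiAux.psi_eq hr0 hr1
  have p2 := PsiAux.psi_eq hρ'0 hρ'1
  rw [hback, hrw, hρ'sq] at p2
  have hC1 : EE r - (1 - r^2) * EK r ≠ 0 := (PsiAux.C_pos hr0 hr1).ne'
  have hC2 : EE ρ' - r^2 * EK ρ' ≠ 0 := by
    have := PsiAux.C_pos hρ'0 hρ'1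
    rw [hrw] at this
    exact this.ne'
  rw [p1, p2]
  field_simp
  rfl
end

section
/- K'(3 − 2√2) = 2·K(3 − 2√2), where K'(r) = K(√(1−r²)). -/
open Real Set Filter Topology

set_option maxHeartbeats 1000000 in
lemma landen {k : ℝ} (hk0 : 0 ≤ k) (hk1 : k < 1) :
    EK (2 * Real.sqrt k / (1 + k)) = (1 + k) * EK k := by
  have hk1' : (0:ℝ) < 1 + k := by linarith
  have hgsq : (2 * Real.sqrt k / (1 + k)) ^ 2 = 4 * k / (1 + k) ^ 2 := by
    rw [div_pow, mul_pow, Real.sq_sqrt hk0]; ring_nf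
  set g : ℝ := 2 * Real.sqrt k / (1 + k) with hg
  have hg1 : g ^ 2 < 1 := by
    rw [hgsq, div_lt_one (by positivity)]; nlinarith
  have hg0 : 0 ≤ g ^ 2 := sq_nonneg g
  have key : ∀ x : ℝ, 0 < 1 - k ^ 2 * Real.sin x ^ 2 := by
    intro x
    nlinarith [Real.sin_sq_le_one x, sq_nonneg (Real.sin x), sq_nonneg k]
  have keyG : ∀ u : ℝ, 0 < 1 - g ^ 2 * Real.sin u ^ 2 := by
    intro u
    nlinarith [Real.sin_sq_le_one u, sq_nonneg (Real.sin u)]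
  have keyD1 : ∀ x : ℝ, 0 < 1 + k * Real.sin x ^ 2 := by
    intro x; nlinarith [sq_nonneg (Real.sin x)]
  have keyD2 : ∀ x : ℝ, 0 < 1 - k * Real.sin x ^ 2 := by
    intro x; nlinarith [Real.sin_sq_le_one x]
  set s : ℝ → ℝ := fun x => (1 + k) * Real.sin x / (1 + k * Real.sin x ^ 2) with hs
  set f : ℝ → ℝ := fun x => Real.arcsin (s x) with hf
  set f' : ℝ → ℝ := fun x =>
    (1 + k) * (1 - k * Real.sin x ^ 2) /
      ((1 + k * Real.sin x ^ 2) * Real.sqrt (1 - k ^ 2 * Real.sin x ^ 2)) with hf'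
  set G : ℝ → ℝ := fun u => 1 / Real.sqrt (1 - g ^ 2 * Real.sin u ^ 2) with hG
  -- continuity
  have hscont : Continuous s := by
    apply Continuous.div (by fun_prop) (by fun_prop)
    exact fun x => ne_of_gt (keyD1 x)
  have hfcont : Continuous f := Real.continuous_arcsin.comp hscont
  have hf'cont : Continuous f' := by
    apply Continuous.div (by fun_prop) (by fun_prop)
    exact fun x => ne_of_gt (mul_pos (keyD1 x) (Real.sqrt_pos.2 (key x)))
  have hGcont : Continuous G := by
    apply Continuous.div continuous_const (by fun_prop)
    exact fun u => ne_of_gt (Real.sqrt_pos.2 (keyG u))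
  -- derivative on the open interval
  have hderiv : ∀ x ∈ Ioo (0:ℝ) (π/2), HasDerivAt f (f' x) x := by
    intro x hx
    obtain ⟨hx1, hx2⟩ := hx
    have hx' : x ∈ Ioo (0:ℝ) (π/2) := ⟨hx1, hx2⟩
    have hsin0 : 0 < Real.sin x :=
      Real.sin_pos_of_pos_of_lt_pi hx1 (lt_trans hx2 (by linarith [Real.pi_pos]))
    have hcos0 : 0 < Real.cos x :=
      Real.cos_pos_of_mem_Ioo ⟨by linarith [Real.pi_pos], hx2⟩
    have hpyth : Real.sin x ^ 2 + Real.cos x ^ 2 = 1 := Real.sin_sq_add_cos_sq x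
    have hsin1 : Real.sin x < 1 := by nlinarith
    have hksin : k * Real.sin x < 1 := by nlinarith
    have hsx1 : s x < 1 := by
      rw [hs]; simp only
      rw [div_lt_one (keyD1 x)]
      nlinarith
    have hsx0 : 0 ≤ s x := by
      rw [hs]; simp only
      exact div_nonneg (by positivity) (le_of_lt (keyD1 x))
    -- derivative of s
    have hN : HasDerivAt (fun y => (1 + k) * Real.sin y) ((1 + k) * Real.cos x) x :=
      (Real.hasDerivAt_sin x).const_mul (1 + k)
    have hD : HasDerivAt (fun y => 1 + k * Real.sin y ^ 2)
        (k * (2 * Real.sin x * Real.cos x)) x := by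
      have := (((Real.hasDerivAt_sin x).pow 2).const_mul k).const_add (1:ℝ)
      simpa using this
    have hsder : HasDerivAt s
        (((1 + k) * Real.cos x * (1 + k * Real.sin x ^ 2) -
          (1 + k) * Real.sin x * (k * (2 * Real.sin x * Real.cos x))) /
          (1 + k * Real.sin x ^ 2) ^ 2) x :=
      hN.div hD (ne_of_gt (keyD1 x))
    have harc : HasDerivAt Real.arcsin (1 / Real.sqrt (1 - s x ^ 2)) (s x) :=
      Real.hasDerivAt_arcsin (by linarith) (ne_of_lt hsx1)
    have hcomp := harc.comp x hsder
    -- identify √(1 - s x ^ 2)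
    have hsqrt : Real.sqrt (1 - s x ^ 2) =
        Real.cos x * Real.sqrt (1 - k ^ 2 * Real.sin x ^ 2) / (1 + k * Real.sin x ^ 2) := by
      have h1 : 1 - s x ^ 2 =
          (Real.cos x * Real.sqrt (1 - k ^ 2 * Real.sin x ^ 2) / (1 + k * Real.sin x ^ 2)) ^ 2 := by
        rw [hs]; simp only
        have hsq : Real.sqrt (1 - k ^ 2 * Real.sin x ^ 2) ^ 2 = 1 - k ^ 2 * Real.sin x ^ 2 :=
          Real.sq_sqrt (le_of_lt (key x))
        field_simp
        nlinarith [hsq, hpyth]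
      rw [h1, Real.sqrt_sq (by positivity)]
    have heq : 1 / Real.sqrt (1 - s x ^ 2) *
        (((1 + k) * Real.cos x * (1 + k * Real.sin x ^ 2) -
          (1 + k) * Real.sin x * (k * (2 * Real.sin x * Real.cos x))) /
          (1 + k * Real.sin x ^ 2) ^ 2) = f' x := by
      rw [hsqrt, hf']; simp only
      have hsq0 : 0 < Real.sqrt (1 - k ^ 2 * Real.sin x ^ 2) := Real.sqrt_pos.2 (key x)
      field_simp
      ring
    rw [← heq]
    exact hcomp
  -- endpoints
  have hf0 : f 0 = 0 := by simp [hf, hs]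
  have hfpi : f (π/2) = π/2 := by
    simp only [hf, hs, Real.sin_pi_div_two, one_pow, mul_one]
    rw [div_self (by positivity), Real.arcsin_one]
  -- substitution
  have hpi2 : (0:ℝ) < π/2 := by positivity
  have hsub := intervalIntegral.integral_comp_smul_deriv'' (a := (0:ℝ)) (b := π/2)
    (f := f) (f' := f') (g := G) hfcont.continuousOn
    (by
      rw [min_eq_left hpi2.le, max_eq_right hpi2.le]
      intro x hx
      exact (hderiv x hx).hasDerivWithinAt)
    hf'cont.continuousOn hGcont.continuousOn
  rw [hf0, hfpi] at hsub
  -- pointwise identity on the interval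
  have hpt : ∀ x ∈ uIcc (0:ℝ) (π/2), f' x • (G ∘ f) x = (1 + k) * (1 / Real.sqrt (1 - k^2 * Real.sin x ^ 2)) := by
    intro x hx
    rw [uIcc_of_le hpi2.le] at hx
    have hsin0 : 0 ≤ Real.sin x := Real.sin_nonneg_of_nonneg_of_le_pi hx.1 (by linarith [hx.2, Real.pi_pos])
    have hsin1 : Real.sin x ≤ 1 := Real.sin_le_one x
    have hsx0 : 0 ≤ s x := by
      rw [hs]; simp only
      exact div_nonneg (by positivity) (le_of_lt (keyD1 x))
    have hsx1 : s x ≤ 1 := by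
      rw [hs]; simp only
      rw [div_le_one (keyD1 x)]
      have hkA : k * Real.sin x ≤ 1 := by nlinarith
      nlinarith [mul_nonneg (sub_nonneg.2 hsin1) (sub_nonneg.2 hkA)]
    have hsinf : Real.sin (f x) = s x := Real.sin_arcsin (by linarith) hsx1
    have h1 : 1 - g ^ 2 * Real.sin (f x) ^ 2 =
        ((1 - k * Real.sin x ^ 2) / (1 + k * Real.sin x ^ 2)) ^ 2 := by
      rw [hsinf, hgsq, hs]; simp only
      field_simp
      ring
    simp only [Function.comp_apply, smul_eq_mul, hG, hf']
    rw [hf] at h1 ⊢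
    rw [h1, Real.sqrt_sq (le_of_lt (div_pos (keyD2 x) (keyD1 x)))]
    have hq0 : 0 < Real.sqrt (1 - k ^ 2 * Real.sin x ^ 2) := Real.sqrt_pos.2 (key x)
    have hd1 : (1 + k * Real.sin x ^ 2) ≠ 0 := ne_of_gt (keyD1 x)
    have hd2 : (1 - k * Real.sin x ^ 2) ≠ 0 := ne_of_gt (keyD2 x)
    have hqne : Real.sqrt (1 - k ^ 2 * Real.sin x ^ 2) ≠ 0 := ne_of_gt hq0
    rw [one_div_div]
    rw [div_mul_div_comm, mul_one_div,
      div_eq_div_iff (mul_pos (mul_pos (keyD1 x) hq0) (keyD2 x)).ne' hqne]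
    ring
  have hGint : EK g = ∫ u in (0:ℝ)..(π/2), G u := by rw [EK, hG]
  rw [hGint, ← hsub, intervalIntegral.integral_congr hpt, EK,
    ← intervalIntegral.integral_const_mul]

theorem EK'_special_value : EK' (3 - 2 * Real.sqrt 2) = 2 * EK (3 - 2 * Real.sqrt 2) := by
  rw [EK']
  have h2 : Real.sqrt 2 ^ 2 = 2 := Real.sq_sqrt (by norm_num)
  have h2pos : (0:ℝ) < Real.sqrt 2 := Real.sqrt_pos.2 (by norm_num)
  have h2lt : Real.sqrt 2 < 3/2 := by nlinarith
  have h2gt : 1 < Real.sqrt 2 := by nlinarith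
  have hr0 : (0:ℝ) ≤ 3 - 2 * Real.sqrt 2 := by nlinarith
  have hr1 : (3:ℝ) - 2 * Real.sqrt 2 < 1 := by nlinarith
  have hsqr : Real.sqrt (3 - 2 * Real.sqrt 2) = Real.sqrt 2 - 1 := by
    rw [show (3:ℝ) - 2 * Real.sqrt 2 = (Real.sqrt 2 - 1)^2 by nlinarith]
    exact Real.sqrt_sq (by linarith)
  have l1 := landen hr0 hr1
  have e1 : 2 * Real.sqrt (3 - 2 * Real.sqrt 2) / (1 + (3 - 2 * Real.sqrt 2)) = Real.sqrt 2 / 2 := by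
    rw [hsqr, div_eq_div_iff (by nlinarith) (by norm_num)]
    nlinarith
  have hh0 : (0:ℝ) ≤ Real.sqrt 2 / 2 := by positivity
  have hh1 : Real.sqrt 2 / 2 < 1 := by nlinarith
  have l2 := landen hh0 hh1
  have hq : Real.sqrt (Real.sqrt 2 / 2) ^ 2 = Real.sqrt 2 / 2 := Real.sq_sqrt (by positivity)
  have e2 : Real.sqrt (1 - (3 - 2 * Real.sqrt 2)^2) =
      2 * Real.sqrt (Real.sqrt 2 / 2) / (1 + Real.sqrt 2 / 2) := by
    rw [show 1 - (3 - 2 * Real.sqrt 2)^2 =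
        (2 * Real.sqrt (Real.sqrt 2 / 2) / (1 + Real.sqrt 2 / 2))^2 from ?_]
    · exact Real.sqrt_sq (by positivity)
    · rw [div_pow, mul_pow, hq]
      rw [eq_div_iff (by positivity)]
      linear_combination (-(Real.sqrt 2)^2 - Real.sqrt 2 + 4) * h2
  have l1' : EK (Real.sqrt 2 / 2) = (1 + (3 - 2 * Real.sqrt 2)) * EK (3 - 2 * Real.sqrt 2) := by
    rw [← e1]; exact l1
  rw [e2, l2, l1', ← mul_assoc,
    show (1 + Real.sqrt 2 / 2) * (1 + (3 - 2 * Real.sqrt 2)) = 2 by linear_combination -h2]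
end

section
/- For every r∈(0,1), letting t = (1−r)/(1+r), one has K(t²) = ((1+r)²/4) · K'(r²). -/
open Real Set Filter Topology

lemma aux_pos (k2 : ℝ) (hk2 : k2 < 1) (t : ℝ) : 0 < 1 - k2 * Real.sin t ^ 2 := by
  have h1 : Real.sin t ^ 2 ≤ 1 := Real.sin_sq_le_one t
  have h2 : (0:ℝ) ≤ Real.sin t ^ 2 := sq_nonneg _
  rcases le_or_gt k2 0 with h | h
  · nlinarith
  · nlinarith

lemma aux_cont (k2 : ℝ) (hk2 : k2 < 1) :
    Continuous (fun t : ℝ => 1 / Real.sqrt (1 - k2 * Real.sin t ^ 2)) :=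
  continuous_const.div
    ((continuous_const.sub (continuous_const.mul (Real.continuous_sin.pow 2))).sqrt)
    (fun t => ne_of_gt (Real.sqrt_pos.mpr (aux_pos k2 hk2 t)))

set_option maxHeartbeats 2000000 in
lemma landen_step (m : ℝ) (hm0 : 0 ≤ m) (hm1 : m < 1) :
    EK (Real.sqrt (4*m) / (1+m)) = (1+m) * EK m := by
  have hm1p : (0:ℝ) < 1 + m := by linarith
  set k2 : ℝ := 4*m/(1+m)^2 with hk2def
  have hk2 : k2 < 1 := by
    rw [hk2def, div_lt_one (by positivity)]; nlinarith
  have hk2' : (Real.sqrt (4*m) / (1+m))^2 = k2 := by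
    rw [div_pow, Real.sq_sqrt (by linarith : (0:ℝ) ≤ 4*m)]
  have hm2 : m^2 < 1 := by nlinarith
  set f : ℝ → ℝ := fun t => 1 / Real.sqrt (1 - k2 * Real.sin t ^ 2) with hfdef
  have hf : Continuous f := aux_cont k2 hk2
  set fm : ℝ → ℝ := fun t => 1 / Real.sqrt (1 - m^2 * Real.sin t ^ 2) with hfmdef
  have hfm : Continuous fm := aux_cont (m^2) hm2
  set u : ℝ → ℝ := fun φ => (1+m) * Real.sin φ / (1 + m * Real.sin φ ^ 2) with hudef
  set g : ℝ → ℝ := fun φ => Real.arcsin (u φ) with hgdef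
  set g' : ℝ → ℝ := fun φ => (1+m)*(1 - m * Real.sin φ^2) /
      ((1 + m * Real.sin φ^2) * Real.sqrt (1 - m^2 * Real.sin φ^2)) with hg'def
  -- basic positivity facts valid for every φ
  have hA : ∀ φ : ℝ, 0 < 1 + m * Real.sin φ ^ 2 := by
    intro φ; have := sq_nonneg (Real.sin φ); nlinarith
  have hB : ∀ φ : ℝ, 0 < 1 - m * Real.sin φ ^ 2 := fun φ => aux_pos m hm1 φ
  have hC : ∀ φ : ℝ, 0 < 1 - m^2 * Real.sin φ ^ 2 := fun φ => aux_pos (m^2) hm2 φ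
  have hu_cont : Continuous u :=
    (continuous_const.mul Real.continuous_sin).div
      (continuous_const.add (continuous_const.mul (Real.continuous_sin.pow 2)))
      (fun φ => ne_of_gt (hA φ))
  have hg_cont : Continuous g := Real.continuous_arcsin.comp hu_cont
  have hg'_cont : Continuous g' :=
    (continuous_const.mul (continuous_const.sub
        (continuous_const.mul (Real.continuous_sin.pow 2)))).div
      (((continuous_const.add (continuous_const.mul (Real.continuous_sin.pow 2)))).mul
        ((continuous_const.sub (continuous_const.mul (Real.continuous_sin.pow 2))).sqrt))
      (fun φ => by
        have := hA φ; have := Real.sqrt_pos.mpr (hC φ); positivity)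
  -- key identity for b < π/2
  have key : ∀ b ∈ Ico (0:ℝ) (π/2),
      (∫ θ in (0:ℝ)..(g b), f θ) = (1+m) * ∫ φ in (0:ℝ)..b, fm φ := by
    rintro b ⟨hb0, hbπ⟩
    have huIcc : uIcc (0:ℝ) b = Icc 0 b := uIcc_of_le hb0
    -- pointwise facts on [0, b]
    have hptfacts : ∀ φ ∈ Icc (0:ℝ) b,
        0 ≤ Real.sin φ ∧ Real.sin φ < 1 ∧ 0 < Real.cos φ := by
      rintro φ ⟨hφ0, hφb⟩
      have hφπ : φ < π/2 := lt_of_le_of_lt hφb hbπ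
      have hπ : (0:ℝ) < π := Real.pi_pos
      refine ⟨Real.sin_nonneg_of_nonneg_of_le_pi hφ0 (by linarith), ?_, ?_⟩
      · have := Real.strictMonoOn_sin (by constructor <;> [linarith; linarith] :
            φ ∈ Icc (-(π/2)) (π/2))
          (by constructor <;> [linarith; linarith] : (π/2) ∈ Icc (-(π/2)) (π/2)) hφπ
        simpa using this
      · exact Real.cos_pos_of_mem_Ioo ⟨by linarith, hφπ⟩
    have hderiv : ∀ φ ∈ uIcc (0:ℝ) b, HasDerivAt g (g' φ) φ := by
      rw [huIcc]
      intro φ hφ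
      obtain ⟨hs0, hs1, hc⟩ := hptfacts φ hφ
      set s := Real.sin φ
      have hAφ := hA φ; have hBφ := hB φ; have hCφ := hC φ
      have hms : m * s < 1 := by nlinarith
      have hu_lt : u φ < 1 := by
        rw [hudef]; simp only
        rw [div_lt_one (hA φ)]
        nlinarith [mul_pos (sub_pos.mpr hs1) (sub_pos.mpr hms)]
      have hu_nonneg : 0 ≤ u φ := by
        rw [hudef]; positivity
      -- derivative of u
      have hu_deriv : HasDerivAt u
          ((1+m) * Real.cos φ * (1 - m * s^2) / (1 + m * s^2)^2) φ := by
        have hnum : HasDerivAt (fun x => (1+m) * Real.sin x) ((1+m) * Real.cos φ) φ :=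
          (Real.hasDerivAt_sin φ).const_mul _
        have hden : HasDerivAt (fun x => 1 + m * Real.sin x ^ 2)
            (m * (2 * Real.sin φ ^ 1 * Real.cos φ)) φ :=
          (((Real.hasDerivAt_sin φ).pow 2).const_mul m).const_add 1
        have := hnum.div hden (ne_of_gt (hA φ))
        refine this.congr_deriv ?_
        field_simp
        ring
      -- derivative of g = arcsin ∘ u
      have harc : HasDerivAt Real.arcsin (1 / Real.sqrt (1 - u φ ^ 2)) (u φ) :=
        Real.hasDerivAt_arcsin (by linarith) (ne_of_lt hu_lt)
      have hcomp := harc.comp φ hu_deriv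
      refine hcomp.congr_deriv ?_
      have hsq : 1 - u φ ^ 2 = (Real.cos φ * Real.sqrt (1 - m^2 * s^2) / (1 + m * s^2))^2 := by
        have h1 : (Real.cos φ * Real.sqrt (1 - m^2 * s^2) / (1 + m * s^2))^2
            = Real.cos φ ^ 2 * (1 - m^2 * s^2) / (1 + m * s^2)^2 := by
          rw [div_pow, mul_pow, Real.sq_sqrt hCφ.le]
        rw [h1, Real.cos_sq' φ, hudef]; simp only
        field_simp
        ring
      have hsqrt : Real.sqrt (1 - u φ ^ 2)
          = Real.cos φ * Real.sqrt (1 - m^2 * s^2) / (1 + m * s^2) := by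
        rw [hsq, Real.sqrt_sq (by positivity)]
      rw [hg'def]; simp only
      rw [hsqrt]
      have hsC : 0 < Real.sqrt (1 - m^2 * s^2) := Real.sqrt_pos.mpr hCφ
      field_simp
      ring
    have hsubst := intervalIntegral.integral_comp_smul_deriv hderiv
      (hg'_cont.continuousOn) hf
    have hg0 : g 0 = 0 := by
      rw [hgdef, hudef]; simp
    rw [hg0] at hsubst
    rw [← hsubst]
    rw [← intervalIntegral.integral_const_mul]
    apply intervalIntegral.integral_congr
    intro φ hφ
    rw [huIcc] at hφ
    obtain ⟨hs0, hs1, hc⟩ := hptfacts φ hφ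
    set s := Real.sin φ
    have hAφ := hA φ; have hBφ := hB φ; have hCφ := hC φ
    have hms : m * s < 1 := by nlinarith
    have hu_lt : u φ ≤ 1 := by
      rw [hudef]; simp only
      rw [div_le_one (hA φ)]
      nlinarith [mul_pos (sub_pos.mpr hs1) (sub_pos.mpr hms)]
    have hu_nonneg : 0 ≤ u φ := by rw [hudef]; positivity
    have hsin_g : Real.sin (g φ) = u φ := Real.sin_arcsin (by linarith) hu_lt
    have hfg : f (g φ) = (1 + m * s^2) / (1 - m * s^2) := by
      rw [hfdef]; simp only
      rw [hsin_g]
      have : 1 - k2 * u φ ^ 2 = ((1 - m * s^2) / (1 + m * s^2))^2 := by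
        rw [hk2def, hudef]; simp only
        field_simp
        ring
      rw [this, Real.sqrt_sq (by positivity), one_div, inv_div]
    simp only [smul_eq_mul, Function.comp_apply]
    rw [hfg, hg'def, hfmdef]; simp only
    have hsC : 0 < Real.sqrt (1 - m^2 * s^2) := Real.sqrt_pos.mpr hCφ
    have hBs : 1 - m * s^2 ≠ 0 := ne_of_gt hBφ
    field_simp
    ring
  -- limit argument
  set Φ : ℝ → ℝ := fun x => ∫ θ in (0:ℝ)..x, f θ with hΦdef
  set Ψ : ℝ → ℝ := fun x => ∫ θ in (0:ℝ)..x, fm θ with hΨdef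
  have hΦc : Continuous Φ :=
    intervalIntegral.continuous_primitive (fun a b => hf.intervalIntegrable a b) 0
  have hΨc : Continuous Ψ :=
    intervalIntegral.continuous_primitive (fun a b => hfm.intervalIntegrable a b) 0
  have hgπ : g (π/2) = π/2 := by
    rw [hgdef, hudef]; simp only [Real.sin_pi_div_two, one_pow, mul_one]
    rw [div_self (ne_of_gt hm1p), Real.arcsin_one]
  have h1 : Tendsto (fun b => Φ (g b)) (𝓝[<] (π/2)) (𝓝 (Φ (π/2))) := by
    refine Tendsto.mono_left ?_ nhdsWithin_le_nhds
    have := (hΦc.comp hg_cont).tendsto (π/2)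
    simpa [Function.comp_def, hgπ] using this
  have h2 : Tendsto (fun b => (1+m) * Ψ b) (𝓝[<] (π/2)) (𝓝 ((1+m) * Ψ (π/2))) := by
    refine Tendsto.mono_left ?_ nhdsWithin_le_nhds
    exact (hΨc.tendsto (π/2)).const_mul (1+m)
  have heq : (fun b => Φ (g b)) =ᶠ[𝓝[<] (π/2)] (fun b => (1+m) * Ψ b) := by
    filter_upwards [Ioo_mem_nhdsLT_of_mem (⟨by positivity, le_refl _⟩ :
      (π/2) ∈ Ioc (0:ℝ) (π/2))] with b hb
    exact key b ⟨hb.1.le, hb.2⟩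
  have hfinal : Φ (π/2) = (1+m) * Ψ (π/2) :=
    tendsto_nhds_unique (h1.congr' heq) h2
  have hEK1 : EK (Real.sqrt (4*m) / (1+m)) = Φ (π/2) := by
    rw [EK, hΦdef, hfdef]
    simp only [hk2']
  have hEK2 : EK m = Ψ (π/2) := by rw [EK, hΨdef, hfmdef]
  rw [hEK1, hEK2, hfinal]

theorem landen_EK (r : ℝ) (hr : r ∈ Ioo (0:ℝ) 1) :
    EK (((1 - r) / (1 + r))^2) = (1 + r)^2 / 4 * EK' (r^2) := by
  obtain ⟨hr0, hr1⟩ := hr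
  have h1r : (0:ℝ) < 1 + r := by linarith
  set t := (1 - r) / (1 + r) with ht
  have ht0 : 0 < t := div_pos (by linarith) h1r
  have ht1 : t < 1 := by rw [ht, div_lt_one h1r]; linarith
  have hA := landen_step (t^2) (by positivity) (by nlinarith)
  have hsq : Real.sqrt (4 * t^2) = 2 * t := by
    rw [show (4:ℝ)*t^2 = (2*t)^2 by ring, Real.sqrt_sq (by positivity)]
  rw [hsq] at hA
  have harg : 2*t/(1+t^2) = (1-r^2)/(1+r^2) := by
    rw [ht]; field_simp; ring
  rw [harg] at hA
  set m1 := (1-r^2)/(1+r^2) with hm1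
  have hr2 : (0:ℝ) < 1 + r^2 := by positivity
  have hm10 : 0 ≤ m1 := div_nonneg (by nlinarith) hr2.le
  have hm11 : m1 < 1 := by rw [hm1, div_lt_one hr2]; nlinarith
  have hB := landen_step m1 hm10 hm11
  have harg2 : Real.sqrt (4*m1)/(1+m1) = Real.sqrt (1 - (r^2)^2) := by
    have h1 : 1 + m1 = 2/(1+r^2) := by rw [hm1]; field_simp; ring
    have h2 : 4*m1 = (1 - (r^2)^2) * (2/(1+r^2))^2 := by rw [hm1]; field_simp; ring
    have hq : (0:ℝ) ≤ 1 - (r^2)^2 := by nlinarith [mul_pos (show (0:ℝ) < 1 - r^2 by nlinarith) hr2]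
    rw [h1, h2, Real.sqrt_mul hq, Real.sqrt_sq (by positivity)]
    field_simp
  rw [harg2] at hB
  simp only [EK']
  rw [hB, hA, hm1, ht]
  field_simp
  ring
end

section
/- For every r∈(0,1), letting t = (1−r)/(1+r), one has K'(t²) = (1+r)² · K(r²). -/
open Real Set Filter Topology

open MeasureTheory

/-- helper: equal if squares equal and both nonneg -/
lemma eq_of_sq_eq' {x y : ℝ} (hx : 0 ≤ x) (hy : 0 ≤ y) (h : x^2 = y^2) : x = y := by
  rw [← Real.sqrt_sq hx, h, Real.sqrt_sq hy]

/-- rational integrand for the AGM integral -/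
noncomputable def gg (a b t : ℝ) : ℝ := 1 / Real.sqrt ((t^2 + a^2) * (t^2 + b^2))

/-- trig form of the AGM integral -/
noncomputable def II (a b : ℝ) : ℝ :=
  ∫ θ in (0:ℝ)..(π/2), 1 / Real.sqrt (a^2 * Real.cos θ ^ 2 + b^2 * Real.sin θ ^ 2)

lemma gg_cont {a b : ℝ} (ha : 0 < a) (hb : 0 < b) : Continuous (gg a b) := by
  have h : ∀ t : ℝ, 0 < (t^2 + a^2) * (t^2 + b^2) := fun t => by positivity
  exact continuous_const.div
    (((((continuous_id.pow 2).add continuous_const).mul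
      ((continuous_id.pow 2).add continuous_const)).sqrt))
    (fun t => (Real.sqrt_pos.mpr (h t)).ne')

lemma gg_nonneg (a b t : ℝ) : 0 ≤ gg a b t := by
  unfold gg; positivity

lemma gg_integrable {a b : ℝ} (ha : 0 < a) (hb : 0 < b) : Integrable (gg a b) := by
  set c : ℝ := min 1 (min (a^2) (b^2)) with hc
  have hc0 : 0 < c := lt_min one_pos (lt_min (by positivity) (by positivity))
  have hca : c ≤ a^2 := (min_le_right _ _).trans (min_le_left _ _)
  have hcb : c ≤ b^2 := (min_le_right _ _).trans (min_le_right _ _)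
  have hc1 : c ≤ 1 := min_le_left _ _
  refine (integrable_inv_one_add_sq.const_mul c⁻¹).mono'
    (gg_cont ha hb).aestronglyMeasurable ?_
  filter_upwards with t
  rw [Real.norm_of_nonneg (gg_nonneg a b t)]
  have h1 : c * (1 + t^2) ≤ Real.sqrt ((t^2 + a^2) * (t^2 + b^2)) := by
    refine (Real.le_sqrt (by positivity) (by positivity)).mpr ?_
    have e1 : c * (1 + t^2) ≤ t^2 + a^2 := by nlinarith
    have e2 : c * (1 + t^2) ≤ t^2 + b^2 := by nlinarith
    nlinarith [mul_le_mul e1 e2 (by positivity : (0:ℝ) ≤ c * (1+t^2)) (by positivity : (0:ℝ) ≤ t^2 + a^2)]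
  have h2 : 0 < c * (1 + t^2) := by positivity
  calc gg a b t ≤ 1 / (c * (1 + t^2)) := by
        unfold gg
        exact one_div_le_one_div_of_le h2 h1
    _ = c⁻¹ * (1 + t^2)⁻¹ := by rw [one_div, mul_inv]

lemma gauss_ptwise {a b : ℝ} (ha : 0 < a) (hb : 0 < b) (u : ℝ) :
    (1 + u / Real.sqrt (u^2 + a*b)) * gg a b (u + Real.sqrt (u^2 + a*b))
      = (1/2) * gg ((a+b)/2) (Real.sqrt (a*b)) u := by
  have hab : 0 < a * b := by positivity
  set s := Real.sqrt (u^2 + a*b) with hs_def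
  have hs0 : 0 < s := Real.sqrt_pos.mpr (by positivity)
  have hs2 : s^2 = u^2 + a*b := Real.sq_sqrt (by positivity)
  have habs : |u| < s := by
    rw [← Real.sqrt_sq_eq_abs]
    exact Real.sqrt_lt_sqrt (sq_nonneg u) (by nlinarith)
  obtain ⟨hu1, hu2⟩ := abs_lt.mp habs
  have ht : 0 < u + s := by linarith
  have h1 : 1 + u / s = (u + s) / s := by field_simp; ring
  rw [h1]
  unfold gg
  rw [Real.sq_sqrt hab.le]
  have hP : 0 < ((u+s)^2 + a^2) * ((u+s)^2 + b^2) := by positivity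
  have hQ : 0 < (u^2 + ((a+b)/2)^2) * (u^2 + a*b) := by positivity
  apply eq_of_sq_eq'
  · positivity
  · positivity
  · simp only [mul_pow, div_pow, one_pow]
    rw [Real.sq_sqrt hP.le,
      Real.sq_sqrt (by positivity : (0:ℝ) ≤ (u ^ 2 + (a + b) ^ 2 / 2 ^ 2) * (u ^ 2 + a * b))]
    have h2 : ((u+s)^2 + a^2) * ((u+s)^2 + b^2) = 4*(u+s)^2*(u^2 + (a+b)^2/2^2) := by
      linear_combination (s^2 + 4*u*s + 3*u^2 - a*b) * hs2
    rw [h2, hs2]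
    have h3 : u + s ≠ 0 := ht.ne'
    have h4 : u^2 + (a+b)^2/2^2 ≠ 0 := by positivity
    have h5 : u^2 + a*b ≠ 0 := by positivity
    field_simp
    ring

lemma inv_ptwise {a b x : ℝ} (ha : 0 < a) (hb : 0 < b) (hx : 0 < x) :
    (x^2)⁻¹ * gg a b (a*b*x⁻¹) = (a*b)⁻¹ * gg a b x := by
  unfold gg
  apply eq_of_sq_eq'
  · positivity
  · positivity
  · simp only [mul_pow, div_pow, one_pow, inv_pow]
    rw [Real.sq_sqrt (by positivity :
        (0:ℝ) ≤ (a^2*b^2*(x^2)⁻¹ + a^2) * (a^2*b^2*(x^2)⁻¹ + b^2)),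
      Real.sq_sqrt (by positivity : (0:ℝ) ≤ (x^2 + a^2) * (x^2 + b^2))]
    have h1 : x ≠ 0 := hx.ne'
    field_simp
    ring

lemma II_hom {a b l : ℝ} (hl : 0 < l) :
    II (l*a) (l*b) = l⁻¹ * II a b := by
  unfold II
  rw [← intervalIntegral.integral_const_mul]
  apply intervalIntegral.integral_congr
  intro θ _
  dsimp only
  have h1 : (l*a)^2 * Real.cos θ^2 + (l*b)^2 * Real.sin θ^2
      = l^2 * (a^2 * Real.cos θ^2 + b^2 * Real.sin θ^2) := by ring
  rw [h1, Real.sqrt_mul (sq_nonneg l), Real.sqrt_sq hl.le, one_div, mul_inv, one_div]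

lemma EK_eq_II {s : ℝ} (hs : s^2 ≤ 1) :
    EK s = II 1 (Real.sqrt (1 - s^2)) := by
  unfold EK II
  apply intervalIntegral.integral_congr
  intro θ _
  dsimp only
  have h1 : (1:ℝ)^2 * Real.cos θ^2 + (Real.sqrt (1-s^2))^2 * Real.sin θ^2
      = 1 - s^2 * Real.sin θ^2 := by
    rw [Real.sq_sqrt (by linarith : (0:ℝ) ≤ 1 - s^2)]
    linear_combination Real.sin_sq_add_cos_sq θ
  rw [h1]

lemma G_pos {a b : ℝ} (ha : 0 < a) (hb : 0 < b) (θ : ℝ) :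
    0 < a^2 * Real.cos θ ^ 2 + b^2 * Real.sin θ ^ 2 := by
  have hm : 0 < min a b := lt_min ha hb
  have h1 : (min a b)^2 ≤ a^2 := pow_le_pow_left₀ hm.le (min_le_left a b) 2
  have h2 : (min a b)^2 ≤ b^2 := pow_le_pow_left₀ hm.le (min_le_right a b) 2
  nlinarith [Real.sin_sq_add_cos_sq θ,
    mul_le_mul_of_nonneg_right h1 (sq_nonneg (Real.cos θ)),
    mul_le_mul_of_nonneg_right h2 (sq_nonneg (Real.sin θ)), mul_pos hm hm]

lemma G_cont {a b : ℝ} (ha : 0 < a) (hb : 0 < b) :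
    Continuous (fun θ : ℝ => 1 / Real.sqrt (a^2 * Real.cos θ ^ 2 + b^2 * Real.sin θ ^ 2)) := by
  refine continuous_const.div ?_ (fun θ => (Real.sqrt_pos.mpr (G_pos ha hb θ)).ne')
  exact ((continuous_const.mul ((Real.continuous_cos).pow 2)).add
    (continuous_const.mul ((Real.continuous_sin).pow 2))).sqrt

lemma tan_ptwise {a b : ℝ} (ha : 0 < a) (hb : 0 < b) (x : ℝ) :
    (1 / (1 + x^2) * (1/b)) *
      (1 / Real.sqrt (a^2 * Real.cos (Real.arctan x) ^ 2
        + b^2 * Real.sin (Real.arctan x) ^ 2)) = gg a b (b*x) := by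
  have hb' : b ≠ 0 := hb.ne'
  have h1x : (0:ℝ) < 1 + x^2 := by positivity
  have hD : a^2 * Real.cos (Real.arctan x) ^ 2 + b^2 * Real.sin (Real.arctan x) ^ 2
      = (a^2 + b^2 * x^2) / (1 + x^2) := by
    rw [Real.cos_arctan, Real.sin_arctan, div_pow, div_pow, one_pow,
      Real.sq_sqrt h1x.le]
    field_simp
  rw [hD]
  unfold gg
  apply eq_of_sq_eq'
  · positivity
  · positivity
  · simp only [mul_pow, div_pow, one_pow]
    rw [Real.sq_sqrt (by positivity : (0:ℝ) ≤ (a^2 + b^2*x^2) / (1 + x^2)),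
      Real.sq_sqrt (by positivity : (0:ℝ) ≤ (b^2*x^2 + a^2) * (b^2*x^2 + b^2))]
    have h2 : a^2 + b^2 * x^2 ≠ 0 := by positivity
    field_simp
    ring

lemma II_eq {a b : ℝ} (ha : 0 < a) (hb : 0 < b) :
    II a b = ∫ t in Ioi (0:ℝ), gg a b t := by
  set G := fun θ : ℝ => 1 / Real.sqrt (a^2 * Real.cos θ ^ 2 + b^2 * Real.sin θ ^ 2) with hG_def
  have hGc : Continuous G := G_cont ha hb
  have hb' : b ≠ 0 := hb.ne'
  have key : ∀ T : ℝ, ∫ t in (0:ℝ)..T, gg a b t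
      = ∫ θ in (0:ℝ)..Real.arctan (T/b), G θ := by
    intro T
    have h := intervalIntegral.integral_comp_smul_deriv
      (f := fun t => Real.arctan (t/b)) (f' := fun t => 1 / (1 + (t/b)^2) * (1/b))
      (g := G) (a := 0) (b := T)
      (fun x _ => by
        simpa [Function.comp_def] using (Real.hasDerivAt_arctan (x/b)).comp x ((hasDerivAt_id x).div_const b))
      (by
        refine Continuous.continuousOn ?_
        refine (continuous_const.div ?_ (fun x => by positivity)).mul continuous_const
        exact continuous_const.add ((continuous_id.div_const b).pow 2))
      hGc
    simp only [zero_div, Real.arctan_zero] at h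
    rw [← h]
    apply intervalIntegral.integral_congr
    intro t _
    have h2 := tan_ptwise ha hb (t/b)
    rw [mul_div_cancel₀ t hb'] at h2
    simpa [hG_def] using h2.symm
  have hInt : IntegrableOn (gg a b) (Ioi 0) := (gg_integrable ha hb).integrableOn
  have t1 : Tendsto (fun T => ∫ t in (0:ℝ)..T, gg a b t) atTop
      (𝓝 (∫ t in Ioi (0:ℝ), gg a b t)) :=
    intervalIntegral_tendsto_integral_Ioi 0 hInt tendsto_id
  have harg : Tendsto (fun T : ℝ => Real.arctan (T/b)) atTop (𝓝 (π/2)) := by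
    refine (tendsto_nhds_of_tendsto_nhdsWithin Real.tendsto_arctan_atTop).comp ?_
    exact Tendsto.atTop_div_const hb tendsto_id
  have hΦ : Continuous (fun s : ℝ => ∫ θ in (0:ℝ)..s, G θ) := by
    refine continuous_iff_continuousAt.mpr (fun s => ?_)
    exact (HasStrictDerivAt.hasDerivAt (hGc.integral_hasStrictDerivAt 0 s)).continuousAt
  have t2 : Tendsto (fun T => ∫ θ in (0:ℝ)..Real.arctan (T/b), G θ) atTop
      (𝓝 (∫ θ in (0:ℝ)..(π/2), G θ)) :=
    (hΦ.continuousAt.tendsto).comp harg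
  have t1' : Tendsto (fun T => ∫ θ in (0:ℝ)..Real.arctan (T/b), G θ) atTop
      (𝓝 (∫ t in Ioi (0:ℝ), gg a b t)) := t1.congr key
  exact (tendsto_nhds_unique t1' t2).symm

lemma gauss_integral {a b : ℝ} (ha : 0 < a) (hb : 0 < b) :
    ∫ u in Ioi (0:ℝ), (1/2) * gg ((a+b)/2) (Real.sqrt (a*b)) u
      = ∫ t in Ioi (Real.sqrt (a*b)), gg a b t := by
  have hab : 0 < a * b := by positivity
  have ha1 : 0 < (a+b)/2 := by positivity
  have hb1 : 0 < Real.sqrt (a*b) := Real.sqrt_pos.mpr hab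
  set f : ℝ → ℝ := fun u => u + Real.sqrt (u^2 + a*b) with hf_def
  set f' : ℝ → ℝ := fun u => 1 + u / Real.sqrt (u^2 + a*b) with hf'_def
  have hfun : (fun x => f' x • (gg a b ∘ f) x)
      = fun u => (1/2) * gg ((a+b)/2) (Real.sqrt (a*b)) u := by
    funext u
    simp only [hf_def, hf'_def, Function.comp, smul_eq_mul]
    exact gauss_ptwise ha hb u
  have hf0 : f 0 = Real.sqrt (a*b) := by
    simp [hf_def]
  have h := MeasureTheory.integral_comp_smul_deriv_Ioi (f := f) (f' := f') (g := gg a b)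
    (a := 0)
    (by
      refine Continuous.continuousOn ?_
      exact continuous_id.add (((continuous_id.pow 2).add continuous_const).sqrt))
    (by
      refine tendsto_atTop_mono (fun u => ?_) tendsto_id
      exact le_add_of_nonneg_right (Real.sqrt_nonneg _))
    (fun x _ => by
      have hx2 : (0:ℝ) < x^2 + a*b := by positivity
      have hd : HasDerivAt f (1 + x / Real.sqrt (x^2 + a*b)) x := by
        have h1 : HasDerivAt (fun u : ℝ => u^2 + a*b) (2*x) x := by
          simpa using (hasDerivAt_pow 2 x).add_const (a*b)
        have h2 := h1.sqrt hx2.ne'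
        have h3 : HasDerivAt (fun u => u + Real.sqrt (u^2 + a*b)) _ x := (hasDerivAt_id x).add h2
        convert h3 using 1
        have : Real.sqrt (x^2 + a*b) ≠ 0 := (Real.sqrt_pos.mpr hx2).ne'
        field_simp
      exact hd.hasDerivWithinAt)
    ((gg_cont ha hb).continuousOn)
    ((gg_integrable ha hb).integrableOn)
    (by
      rw [hfun]
      exact (((gg_integrable ha1 hb1).const_mul (1/2)).integrableOn))
  rw [hfun, hf0] at h
  exact h

lemma inv_integral {a b : ℝ} (ha : 0 < a) (hb : 0 < b) :
    ∫ t in Ioi (Real.sqrt (a*b)), gg a b t = ∫ t in Ioo (0:ℝ) (Real.sqrt (a*b)), gg a b t := by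
  have hab : 0 < a * b := by positivity
  set c := a * b with hc_def
  set sc := Real.sqrt c with hsc_def
  have hsc : 0 < sc := Real.sqrt_pos.mpr hab
  have hsc2 : sc^2 = c := Real.sq_sqrt hab.le
  set g1 : ℝ → ℝ := (Ioo (0:ℝ) sc).indicator (gg a b) with hg1_def
  have h := MeasureTheory.integral_comp_rpow_Ioi (g := fun y => g1 (c * y))
    (p := (-1:ℝ)) (by norm_num)
  -- RHS of h : ∫ y in Ioi 0, g1 (c * y)
  have hrhs : (∫ y in Ioi (0:ℝ), g1 (c * y)) = c⁻¹ * ∫ t in Ioo (0:ℝ) sc, gg a b t := by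
    rw [MeasureTheory.integral_comp_mul_left_Ioi g1 0 hab, mul_zero, smul_eq_mul]
    congr 1
    rw [hg1_def, MeasureTheory.setIntegral_indicator measurableSet_Ioo,
      Set.inter_eq_self_of_subset_right Ioo_subset_Ioi_self]
  have hlhs : (∫ x in Ioi (0:ℝ), (|(-1:ℝ)| * x ^ ((-1:ℝ) - 1)) • g1 (c * x ^ (-1:ℝ)))
      = c⁻¹ * ∫ t in Ioi sc, gg a b t := by
    rw [← MeasureTheory.integral_const_mul]
    rw [show (Ioi sc) = (Ioi (0:ℝ)) ∩ (Ioi sc) from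
      (Set.inter_eq_self_of_subset_right (Ioi_subset_Ioi hsc.le)).symm]
    rw [← MeasureTheory.setIntegral_indicator measurableSet_Ioi]
    apply MeasureTheory.setIntegral_congr_fun measurableSet_Ioi
    intro x hx
    dsimp only
    have hx0 : (0:ℝ) < x := hx
    have hxne : x ≠ 0 := hx0.ne'
    have hpow1 : x ^ (-1:ℝ) = x⁻¹ := by
      rw [Real.rpow_neg hx0.le, Real.rpow_one]
    have hpow2 : x ^ ((-1:ℝ) - 1) = (x^2)⁻¹ := by
      rw [show ((-1:ℝ) - 1) = ((-2:ℤ):ℝ) by norm_num, Real.rpow_intCast]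
      rw [zpow_neg, zpow_two]
      norm_num [sq]
    rw [hpow1, hpow2, abs_neg, abs_one, one_mul, smul_eq_mul]
    by_cases hmem : x ∈ Ioi sc
    · have h1 : c * x⁻¹ ∈ Ioo (0:ℝ) sc := by
        constructor
        · positivity
        · rw [mul_inv_lt_iff₀ hx0]
          nlinarith [hmem.out]
      rw [hg1_def, Set.indicator_of_mem h1, Set.indicator_of_mem hmem]
      have := inv_ptwise ha hb hx0
      rw [← hc_def] at this
      linarith [this]
    · have h1 : c * x⁻¹ ∉ Ioo (0:ℝ) sc := by
        intro hcon
        apply hmem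
        have h2 := hcon.2
        rw [mul_inv_lt_iff₀ hx0] at h2
        have : sc < x := by nlinarith
        exact this
      rw [hg1_def, Set.indicator_of_notMem h1, Set.indicator_of_notMem hmem]
      simp
  rw [hlhs, hrhs] at h
  exact mul_left_cancel₀ (inv_ne_zero hab.ne') h

lemma gauss_II {a b : ℝ} (ha : 0 < a) (hb : 0 < b) :
    II a b = II ((a+b)/2) (Real.sqrt (a*b)) := by
  have hab : 0 < a * b := by positivity
  have ha1 : 0 < (a+b)/2 := by positivity
  have hb1 : 0 < Real.sqrt (a*b) := Real.sqrt_pos.mpr hab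
  have split : ∫ t in Ioi (0:ℝ), gg a b t
      = (∫ t in Ioc (0:ℝ) (Real.sqrt (a*b)), gg a b t)
        + ∫ t in Ioi (Real.sqrt (a*b)), gg a b t := by
    rw [← MeasureTheory.setIntegral_union (Set.Ioc_disjoint_Ioi le_rfl) measurableSet_Ioi
      ((gg_integrable ha hb).integrableOn) ((gg_integrable ha hb).integrableOn)]
    rw [Set.Ioc_union_Ioi_eq_Ioi hb1.le]
  have hIoc : (∫ t in Ioc (0:ℝ) (Real.sqrt (a*b)), gg a b t)
      = ∫ t in Ioi (Real.sqrt (a*b)), gg a b t := by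
    rw [MeasureTheory.integral_Ioc_eq_integral_Ioo, ← inv_integral ha hb]
  have h1 : II a b = 2 * ∫ t in Ioi (Real.sqrt (a*b)), gg a b t := by
    rw [II_eq ha hb, split, hIoc]; ring
  have h2 : II ((a+b)/2) (Real.sqrt (a*b)) = 2 * ∫ t in Ioi (Real.sqrt (a*b)), gg a b t := by
    rw [II_eq ha1 hb1, ← gauss_integral ha hb, MeasureTheory.integral_const_mul]
    ring
  rw [h1, h2]

theorem landen_EK' (r : ℝ) (hr : r ∈ Ioo (0:ℝ) 1) :
    EK' (((1 - r) / (1 + r))^2) = (1 + r)^2 * EK (r^2) := by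
  obtain ⟨hr0, hr1⟩ := hr
  have h1r : (0:ℝ) < 1 + r := by linarith
  have h1r' : (0:ℝ) < 1 - r := by linarith
  set t : ℝ := (1 - r) / (1 + r) with ht_def
  have ht0 : 0 < t := by positivity
  have ht1 : t < 1 := by
    rw [ht_def, div_lt_one h1r]; linarith
  have ht2 : t^2 < 1 := by nlinarith
  have ht4 : (0:ℝ) ≤ 1 - (t^2)^2 := by
    nlinarith [mul_le_mul_of_nonneg_left ht2.le (sq_nonneg t), ht2]
  -- step 1 : EK'(t²) = II 1 (t²)
  have step1 : EK' (t^2) = II 1 (t^2) := by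
    rw [EK']
    rw [EK_eq_II (by rw [Real.sq_sqrt ht4]; nlinarith)]
    congr 1
    rw [Real.sq_sqrt ht4, show (1 : ℝ) - (1 - (t^2)^2) = (t^2)^2 by ring,
      Real.sqrt_sq (sq_nonneg t)]
  -- step 2 : homogeneity
  have hl : (0:ℝ) < ((1+r)^2)⁻¹ := by positivity
  have step2 : II 1 (t^2) = (1+r)^2 * II ((1+r)^2) ((1-r)^2) := by
    have e1 : (1:ℝ) = ((1+r)^2)⁻¹ * (1+r)^2 := by field_simp
    have e2 : t^2 = ((1+r)^2)⁻¹ * (1-r)^2 := by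
      rw [ht_def, div_pow]; field_simp
    rw [e1, e2, II_hom hl, inv_inv]
    rw [← e1]
  -- step 3 : first Gauss step
  have step3 : II ((1+r)^2) ((1-r)^2) = II (1+r^2) (1-r^2) := by
    rw [gauss_II (by positivity) (by positivity)]
    congr 1
    · ring
    · rw [show ((1+r)^2 * (1-r)^2 : ℝ) = (1-r^2)^2 by ring,
        Real.sqrt_sq (by nlinarith : (0:ℝ) ≤ 1 - r^2)]
  -- step 4 : second Gauss step
  have step4 : II (1+r^2) (1-r^2) = II 1 (Real.sqrt (1 - (r^2)^2)) := by
    rw [gauss_II (by positivity) (by nlinarith : (0:ℝ) < 1 - r^2)]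
    congr 1
    · ring
    · congr 1
      ring
  -- step 5 : back to EK
  have step5 : II 1 (Real.sqrt (1 - (r^2)^2)) = EK (r^2) := by
    have hr2 : r^2 < 1 := by nlinarith
    rw [EK_eq_II (by nlinarith [mul_le_mul_of_nonneg_left hr2.le (sq_nonneg r), hr2] : (r^2)^2 ≤ 1)]
  rw [step1, step2, step3, step4, step5]
end

section
/- The function f₂(r) = (E(r) − (1−r)K(r))/r is strictly decreasing on (0,1), with f₂(r)→π/2 as r→0+ and f₂(r)→1 as r→1−; moreover the function f₁(r) = E(r) − (1−r)K(r) is strictly increasing and concave on (0,1), with f₁(r)→0 as r→0+ and f₁(r)→1 as r→1−. -/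
open Real Set Filter Topology
open MeasureTheory

lemma auxX_pos {r : ℝ} (hr : r^2 < 1) (t : ℝ) : 0 < 1 - r^2 * Real.sin t ^ 2 := by
  nlinarith [Real.sin_sq_le_one t, sq_nonneg r]

lemma auxS_pos {r : ℝ} (hr : r^2 < 1) (t : ℝ) :
    0 < Real.sqrt (1 - r^2 * Real.sin t ^ 2) :=
  Real.sqrt_pos.2 (auxX_pos hr t)

lemma contS (r : ℝ) : Continuous (fun t : ℝ => Real.sqrt (1 - r^2 * Real.sin t ^ 2)) := by
  apply Real.continuous_sqrt.comp; fun_prop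

lemma contInvS {r : ℝ} (hr : r^2 < 1) :
    Continuous (fun t : ℝ => 1 / Real.sqrt (1 - r^2 * Real.sin t ^ 2)) :=
  continuous_const.div (contS r) (fun t => (auxS_pos hr t).ne')

lemma contF {r : ℝ} (hr : r^2 < 1) :
    Continuous (fun t : ℝ => Real.sqrt (1 - r^2 * Real.sin t ^ 2)
      - (1 - r) * (1 / Real.sqrt (1 - r^2 * Real.sin t ^ 2))) :=
  (contS r).sub (continuous_const.mul (contInvS hr))

lemma contFp {r : ℝ} (hr : r^2 < 1) :
    Continuous (fun t : ℝ => (1 - 2*r*Real.sin t ^ 2 + r^3 * Real.sin t ^ 4)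
      / Real.sqrt (1 - r^2 * Real.sin t ^ 2) ^ 3) := by
  apply Continuous.div (by fun_prop) ((contS r).pow 3)
    (fun t => pow_ne_zero 3 (auxS_pos hr t).ne')

lemma contGp {r : ℝ} (hr : r^2 < 1) :
    Continuous (fun t : ℝ => (1 - 2*Real.sin t ^ 2 + r^2 * Real.sin t ^ 4)
      / Real.sqrt (1 - r^2 * Real.sin t ^ 2) ^ 3) := by
  apply Continuous.div (by fun_prop) ((contS r).pow 3)
    (fun t => pow_ne_zero 3 (auxS_pos hr t).ne')

lemma f1_eq {r : ℝ} (hr : r^2 < 1) :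
    EE r - (1 - r) * EK r =
      ∫ t in (0:ℝ)..(π/2), (Real.sqrt (1 - r^2 * Real.sin t ^ 2)
        - (1 - r) * (1 / Real.sqrt (1 - r^2 * Real.sin t ^ 2))) := by
  rw [intervalIntegral.integral_sub (g := fun t => (1 - r) * (1 / Real.sqrt (1 - r^2 * Real.sin t ^ 2))) ((contS r).intervalIntegrable _ _)
      ((continuous_const.mul (contInvS hr) : Continuous fun t : ℝ => (1 - r) * (1 / Real.sqrt (1 - r^2 * Real.sin t ^ 2))).intervalIntegrable _ _),
    intervalIntegral.integral_const_mul]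
  rfl

lemma integrand_eq_g {r : ℝ} (hr : r^2 < 1) (t : ℝ) :
    Real.sqrt (1 - r^2 * Real.sin t ^ 2) - (1 - r) * (1 / Real.sqrt (1 - r^2 * Real.sin t ^ 2))
      = r * ((1 - r * Real.sin t ^ 2) / Real.sqrt (1 - r^2 * Real.sin t ^ 2)) := by
  have hX := auxX_pos hr t
  have hS := auxS_pos hr t
  have h2 : Real.sqrt (1 - r^2 * Real.sin t ^ 2) ^ 2 = 1 - r^2 * Real.sin t ^ 2 :=
    Real.sq_sqrt hX.le
  field_simp
  nlinarith [h2]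

lemma f1_eq_g {r : ℝ} (hr : r^2 < 1) :
    EE r - (1 - r) * EK r =
      r * ∫ t in (0:ℝ)..(π/2),
        (1 - r * Real.sin t ^ 2) / Real.sqrt (1 - r^2 * Real.sin t ^ 2) := by
  rw [f1_eq hr, ← intervalIntegral.integral_const_mul]
  exact intervalIntegral.integral_congr (fun t _ => integrand_eq_g hr t)

lemma hasDerivAt_integrand {r : ℝ} (hr : r^2 < 1) (t : ℝ) :
    HasDerivAt (fun x : ℝ => Real.sqrt (1 - x^2 * Real.sin t ^ 2)
        - (1 - x) * (1 / Real.sqrt (1 - x^2 * Real.sin t ^ 2)))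
      ((1 - 2*r*Real.sin t ^ 2 + r^3 * Real.sin t ^ 4)
        / Real.sqrt (1 - r^2 * Real.sin t ^ 2) ^ 3) r := by
  set u := Real.sin t ^ 2 with hu
  have hX : (0:ℝ) < 1 - r^2 * u := auxX_pos hr t
  have hS : (0:ℝ) < Real.sqrt (1 - r^2 * u) := Real.sqrt_pos.2 hX
  have h2 : Real.sqrt (1 - r^2 * u) ^ 2 = 1 - r^2 * u := Real.sq_sqrt hX.le
  have hXd : HasDerivAt (fun x : ℝ => 1 - x^2 * u) (-(2*r*u)) r := by
    have := ((hasDerivAt_pow 2 r).mul_const u).const_sub 1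
    exact this.congr_deriv (by simp)
  have hSd : HasDerivAt (fun x : ℝ => Real.sqrt (1 - x^2 * u))
      (-(2*r*u) / (2 * Real.sqrt (1 - r^2 * u))) r := hXd.sqrt hX.ne'
  have hSinv : HasDerivAt (fun x : ℝ => (Real.sqrt (1 - x^2 * u))⁻¹)
      (-(-(2*r*u) / (2 * Real.sqrt (1 - r^2 * u))) / Real.sqrt (1 - r^2 * u) ^ 2) r :=
    hSd.inv hS.ne'
  have hlin : HasDerivAt (fun x : ℝ => 1 - x) (-1) r := by
    simpa using (hasDerivAt_id r).const_sub 1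
  have hprod := hlin.mul hSinv
  have htot := hSd.sub hprod
  have heq : ∀ x : ℝ, Real.sqrt (1 - x^2 * u) - (1 - x) * (1 / Real.sqrt (1 - x^2 * u))
      = Real.sqrt (1 - x^2 * u) - (1 - x) * (Real.sqrt (1 - x^2 * u))⁻¹ := by
    intro x; rw [one_div]
  rw [show (fun x : ℝ => Real.sqrt (1 - x^2 * u)
        - (1 - x) * (1 / Real.sqrt (1 - x^2 * u)))
      = (fun x : ℝ => Real.sqrt (1 - x^2 * u) - (1 - x) * (Real.sqrt (1 - x^2 * u))⁻¹) from
    funext heq]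
  refine htot.congr_deriv ?_
  symm
  have h4 : u^2 = Real.sin t ^ 4 := by rw [hu]; ring
  rw [← h4]
  field_simp
  linear_combination (r*u - 1) * h2

lemma hasDerivAt_G {r : ℝ} (hr : r^2 < 1) (t : ℝ) :
    HasDerivAt (fun t : ℝ => Real.sin t * Real.cos t / Real.sqrt (1 - r^2 * Real.sin t ^ 2))
      ((1 - 2*Real.sin t ^ 2 + r^2 * Real.sin t ^ 4)
        / Real.sqrt (1 - r^2 * Real.sin t ^ 2) ^ 3) t := by
  have hX : (0:ℝ) < 1 - r^2 * Real.sin t ^ 2 := auxX_pos hr t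
  have hS : (0:ℝ) < Real.sqrt (1 - r^2 * Real.sin t ^ 2) := Real.sqrt_pos.2 hX
  have h2 : Real.sqrt (1 - r^2 * Real.sin t ^ 2) ^ 2 = 1 - r^2 * Real.sin t ^ 2 :=
    Real.sq_sqrt hX.le
  have hnum : HasDerivAt (fun t : ℝ => Real.sin t * Real.cos t)
      (Real.cos t * Real.cos t + Real.sin t * (-Real.sin t)) t :=
    (Real.hasDerivAt_sin t).mul (Real.hasDerivAt_cos t)
  have hXd : HasDerivAt (fun t : ℝ => 1 - r^2 * Real.sin t ^ 2)
      (-(r^2 * (2 * Real.sin t * Real.cos t))) t := by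
    have h1 : HasDerivAt (fun t : ℝ => Real.sin t ^ 2)
        (2 * Real.sin t ^ 1 * Real.cos t) t := (Real.hasDerivAt_sin t).pow 2
    have := (h1.const_mul (r^2)).const_sub 1
    exact this.congr_deriv (by ring)
  have hSd : HasDerivAt (fun t : ℝ => Real.sqrt (1 - r^2 * Real.sin t ^ 2))
      (-(r^2 * (2 * Real.sin t * Real.cos t)) / (2 * Real.sqrt (1 - r^2 * Real.sin t ^ 2))) t :=
    hXd.sqrt hX.ne'
  have htot := hnum.div hSd hS.ne'
  refine htot.congr_deriv ?_
  symm
  have hc : Real.cos t ^ 2 = 1 - Real.sin t ^ 2 := Real.cos_sq' t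
  generalize hSg : Real.sqrt (1 - r^2 * Real.sin t ^ 2) = S at h2 hS
  field_simp
  linear_combination (-(Real.cos t^2 - Real.sin t^2)) * h2 - hc

lemma Fp_split {r : ℝ} (hr : r^2 < 1) (hr1 : 0 < 1 + r) (t : ℝ) :
    (1 - 2*r*Real.sin t ^ 2 + r^3 * Real.sin t ^ 4)
        / Real.sqrt (1 - r^2 * Real.sin t ^ 2) ^ 3
      = Real.sqrt (1 - r^2 * Real.sin t ^ 2) / (1 + r)
        + (r / (1 + r)) * ((1 - 2*Real.sin t ^ 2 + r^2 * Real.sin t ^ 4)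
            / Real.sqrt (1 - r^2 * Real.sin t ^ 2) ^ 3) := by
  have hX : (0:ℝ) < 1 - r^2 * Real.sin t ^ 2 := auxX_pos hr t
  have hS : (0:ℝ) < Real.sqrt (1 - r^2 * Real.sin t ^ 2) := Real.sqrt_pos.2 hX
  have h2 : Real.sqrt (1 - r^2 * Real.sin t ^ 2) ^ 2 = 1 - r^2 * Real.sin t ^ 2 :=
    Real.sq_sqrt hX.le
  generalize hSg : Real.sqrt (1 - r^2 * Real.sin t ^ 2) = S at h2 hS
  field_simp
  linear_combination (-(S^2 + (1 - r^2*Real.sin t^2))) * h2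

/-- The integral of F' equals EE r / (1+r). -/
lemma integral_Fp {r : ℝ} (hr0 : 0 < r) (hr : r < 1) :
    (∫ t in (0:ℝ)..(π/2), (1 - 2*r*Real.sin t ^ 2 + r^3 * Real.sin t ^ 4)
        / Real.sqrt (1 - r^2 * Real.sin t ^ 2) ^ 3) = EE r / (1 + r) := by
  have hr2 : r^2 < 1 := by nlinarith
  have hr1 : (0:ℝ) < 1 + r := by linarith
  rw [intervalIntegral.integral_congr (fun t _ => Fp_split hr2 hr1 t)]
  rw [intervalIntegral.integral_add (g := fun t => (r / (1 + r)) * ((1 - 2*Real.sin t ^ 2 + r^2 * Real.sin t ^ 4)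
        / Real.sqrt (1 - r^2 * Real.sin t ^ 2) ^ 3)) (((contS r).div_const _).intervalIntegrable _ _)
      ((continuous_const.mul (contGp hr2) : Continuous fun t : ℝ => (r / (1 + r)) * ((1 - 2*Real.sin t ^ 2 + r^2 * Real.sin t ^ 4)
        / Real.sqrt (1 - r^2 * Real.sin t ^ 2) ^ 3)).intervalIntegrable _ _)]
  rw [intervalIntegral.integral_div, intervalIntegral.integral_const_mul]
  have hG : (∫ t in (0:ℝ)..(π/2), (1 - 2*Real.sin t ^ 2 + r^2 * Real.sin t ^ 4)
      / Real.sqrt (1 - r^2 * Real.sin t ^ 2) ^ 3) = 0 := by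
    rw [intervalIntegral.integral_eq_sub_of_hasDerivAt
      (fun t _ => hasDerivAt_G hr2 t) ((contGp hr2).intervalIntegrable _ _)]
    simp
  rw [hG]
  simp [EE]

/-- Main derivative formula. -/
lemma hasDerivAt_f1 {r : ℝ} (hr0 : 0 < r) (hr : r < 1) :
    HasDerivAt (fun x => EE x - (1 - x) * EK x) (EE r / (1 + r)) r := by
  have hr2 : r^2 < 1 := by nlinarith
  set ε := min r ((1 - r)/2) with hε
  have hεpos : 0 < ε := lt_min hr0 (by linarith)
  set c := (1 + r)/2 with hc
  have hc1 : c < 1 := by rw [hc]; linarith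
  have hc0 : 0 < c := by rw [hc]; linarith
  have hball : ∀ x ∈ Metric.ball r ε, 0 < x ∧ x < c := by
    intro x hx
    rw [Metric.mem_ball, Real.dist_eq, abs_lt] at hx
    constructor
    · have : ε ≤ r := min_le_left _ _
      linarith [hx.1]
    · have : ε ≤ (1 - r)/2 := min_le_right _ _
      rw [hc]; linarith [hx.2]
  have hd := intervalIntegral.hasDerivAt_integral_of_dominated_loc_of_deriv_le
    (F := fun x t => Real.sqrt (1 - x^2 * Real.sin t ^ 2)
        - (1 - x) * (1 / Real.sqrt (1 - x^2 * Real.sin t ^ 2)))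
    (F' := fun x t => (1 - 2*x*Real.sin t ^ 2 + x^3 * Real.sin t ^ 4)
        / Real.sqrt (1 - x^2 * Real.sin t ^ 2) ^ 3)
    (a := 0) (b := π/2) (μ := volume) (x₀ := r)
    (bound := fun _ => 4 / Real.sqrt (1 - c^2) ^ 3)
    (Metric.ball_mem_nhds r hεpos) ?meas ?int ?pmeas ?bd ?bint ?diff
  case meas =>
    have hmem : Ioo (-1:ℝ) 1 ∈ 𝓝 r := isOpen_Ioo.mem_nhds ⟨by linarith, hr⟩
    filter_upwards [hmem] with x hx
    have hx2 : x^2 < 1 := by nlinarith [hx.1, hx.2]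
    exact (contF hx2).aestronglyMeasurable
  case int => exact (contF hr2).intervalIntegrable _ _
  case pmeas => exact (contFp hr2).aestronglyMeasurable
  case bd =>
    refine ae_of_all _ fun t _ x hx => ?_
    obtain ⟨hx0, hxc⟩ := hball x hx
    have hx2 : x^2 < 1 := by nlinarith
    have hXc : (0:ℝ) < 1 - c^2 := by nlinarith
    have hSc : (0:ℝ) < Real.sqrt (1 - c^2) := Real.sqrt_pos.2 hXc
    have hu0 : (0:ℝ) ≤ Real.sin t ^ 2 := sq_nonneg _
    have hu1 : Real.sin t ^ 2 ≤ 1 := Real.sin_sq_le_one t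
    have hX : (0:ℝ) < 1 - x^2 * Real.sin t ^ 2 := auxX_pos hx2 t
    have hle : Real.sqrt (1 - c^2) ≤ Real.sqrt (1 - x^2 * Real.sin t ^ 2) := by
      apply Real.sqrt_le_sqrt; nlinarith
    have hN : |1 - 2*x*Real.sin t ^ 2 + x^3 * Real.sin t ^ 4| ≤ 4 := by
      rw [abs_le]
      have hx1 : x < 1 := hxc.trans hc1
      have hA0 : 0 ≤ x * Real.sin t ^ 2 := by positivity
      have hA : x * Real.sin t ^ 2 ≤ 1 := by nlinarith
      have hB : 0 ≤ x^3 * Real.sin t ^ 4 := by positivity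
      have hs4 : Real.sin t ^ 4 ≤ 1 := by nlinarith
      have hx3 : x^3 ≤ 1 := by nlinarith
      have hC : x^3 * Real.sin t ^ 4 ≤ 1 := by
        calc x^3 * Real.sin t ^ 4 ≤ 1 * 1 := by
              apply mul_le_mul hx3 hs4 (by positivity) (by norm_num)
          _ = 1 := by norm_num
      constructor <;> nlinarith
    rw [Real.norm_eq_abs, abs_div, abs_of_pos (pow_pos (Real.sqrt_pos.2 hX) 3)]
    apply div_le_div₀ (by norm_num) hN (pow_pos hSc 3)
    exact pow_le_pow_left₀ hSc.le hle 3
  case bint => exact intervalIntegrable_const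
  case diff =>
    refine ae_of_all _ fun t _ x hx => ?_
    obtain ⟨hx0, hxc⟩ := hball x hx
    have hx2 : x^2 < 1 := by nlinarith
    exact hasDerivAt_integrand hx2 t
  have hd2 := hd.2
  rw [integral_Fp hr0 hr] at hd2
  apply hd2.congr_of_eventuallyEq
  have hmem : Ioo (-1:ℝ) 1 ∈ 𝓝 r := isOpen_Ioo.mem_nhds ⟨by linarith, hr⟩
  filter_upwards [hmem] with x hx
  have hx2 : x^2 < 1 := by nlinarith [hx.1, hx.2]
  exact f1_eq hx2

lemma EE_pos {r : ℝ} (hr : r^2 < 1) : 0 < EE r := by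
  apply intervalIntegral.intervalIntegral_pos_of_pos
    ((contS r).intervalIntegrable _ _) (fun t => auxS_pos hr t)
  positivity

lemma EE_anti {a b : ℝ} (ha2 : a^2 < 1) (hb2 : b^2 < 1) (h0 : 0 ≤ a) (hab : a ≤ b) :
    EE b ≤ EE a := by
  apply intervalIntegral.integral_mono_on (by positivity)
    ((contS b).intervalIntegrable _ _) ((contS a).intervalIntegrable _ _)
  intro t _
  apply Real.sqrt_le_sqrt
  nlinarith [sq_nonneg (Real.sin t), mul_le_mul hab hab h0 (h0.trans hab)]

lemma f1_strictMono : StrictMonoOn (fun r => EE r - (1 - r) * EK r) (Ioo (0:ℝ) 1) := by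
  apply strictMonoOn_of_hasDerivWithinAt_pos (convex_Ioo 0 1)
    (f' := fun r => EE r / (1 + r))
  · intro x hx
    exact ((hasDerivAt_f1 hx.1 hx.2).differentiableAt).continuousAt.continuousWithinAt
  · rw [interior_Ioo]
    intro x hx
    exact (hasDerivAt_f1 hx.1 hx.2).hasDerivWithinAt
  · rw [interior_Ioo]
    intro x hx
    have hx2 : x^2 < 1 := by nlinarith [hx.1, hx.2]
    have := EE_pos hx2
    have : (0:ℝ) < 1 + x := by linarith [hx.1]
    positivity

lemma f1_concave : ConcaveOn ℝ (Ioo (0:ℝ) 1) (fun r => EE r - (1 - r) * EK r) := by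
  apply AntitoneOn.concaveOn_of_deriv (convex_Ioo 0 1)
  · intro x hx
    exact ((hasDerivAt_f1 hx.1 hx.2).differentiableAt).continuousAt.continuousWithinAt
  · rw [interior_Ioo]
    intro x hx
    exact ((hasDerivAt_f1 hx.1 hx.2).differentiableAt).differentiableWithinAt
  · rw [interior_Ioo]
    intro x hx y hy hxy
    rw [(hasDerivAt_f1 hx.1 hx.2).deriv, (hasDerivAt_f1 hy.1 hy.2).deriv]
    have hx2 : x^2 < 1 := by nlinarith [hx.1, hx.2]
    have hy2 : y^2 < 1 := by nlinarith [hy.1, hy.2]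
    apply div_le_div₀ (EE_pos hx2).le (EE_anti hx2 hy2 hx.1.le hxy)
      (by linarith [hx.1]) (by linarith)

lemma contg {r : ℝ} (hr : r^2 < 1) :
    Continuous (fun t : ℝ => (1 - r * Real.sin t ^ 2) / Real.sqrt (1 - r^2 * Real.sin t ^ 2)) := by
  apply Continuous.div (by fun_prop) (contS r) (fun t => (auxS_pos hr t).ne')

-- pointwise strict inequality for g
lemma g_strict {a b u : ℝ} (ha : 0 < a) (hab : a < b) (hb : b < 1) (hu : 0 < u) (hu1 : u ≤ 1) :
    (1 - b*u) / Real.sqrt (1 - b^2*u) < (1 - a*u) / Real.sqrt (1 - a^2*u) := by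
  have ha1 : a < 1 := hab.trans hb
  have hXa : (0:ℝ) < 1 - a^2*u := by nlinarith
  have hXb : (0:ℝ) < 1 - b^2*u := by nlinarith
  have hSa := Real.sqrt_pos.2 hXa
  have hSb := Real.sqrt_pos.2 hXb
  have hNa : (0:ℝ) < 1 - a*u := by nlinarith
  have hNb : (0:ℝ) < 1 - b*u := by nlinarith
  have h2a : Real.sqrt (1 - a^2*u) ^ 2 = 1 - a^2*u := Real.sq_sqrt hXa.le
  have h2b : Real.sqrt (1 - b^2*u) ^ 2 = 1 - b^2*u := Real.sq_sqrt hXb.le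
  apply lt_of_pow_lt_pow_left₀ 2 (by positivity)
  rw [div_pow, div_pow, h2a, h2b]
  rw [div_lt_div_iff₀ hXb hXa]
  nlinarith [mul_pos (mul_pos hu (sub_pos.2 hab)) (mul_pos (sub_pos.2 ha1) (sub_pos.2 hb)),
    mul_nonneg (mul_nonneg hu.le (sub_pos.2 hab).le)
      (mul_nonneg (sub_nonneg.2 hu1)
        (add_nonneg (mul_nonneg ha.le (sub_pos.2 hb).le) (mul_nonneg (ha.trans hab).le (sub_pos.2 ha1).le)))]

lemma f2_strictAnti : StrictAntiOn (fun r => (EE r - (1 - r) * EK r) / r) (Ioo (0:ℝ) 1) := by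
  intro a ha b hb hab
  have ha2 : a^2 < 1 := by nlinarith [ha.1, ha.2]
  have hb2 : b^2 < 1 := by nlinarith [hb.1, hb.2]
  simp only
  rw [f1_eq_g ha2, f1_eq_g hb2, mul_div_cancel_left₀ _ hb.1.ne',
    mul_div_cancel_left₀ _ ha.1.ne']
  rw [show (∫ t in (0:ℝ)..(π/2), (1 - b * Real.sin t ^ 2) / Real.sqrt (1 - b^2 * Real.sin t ^ 2))
      = (∫ t in (0:ℝ)..(π/2), (1 - a * Real.sin t ^ 2) / Real.sqrt (1 - a^2 * Real.sin t ^ 2))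
      - ∫ t in (0:ℝ)..(π/2), ((1 - a * Real.sin t ^ 2) / Real.sqrt (1 - a^2 * Real.sin t ^ 2)
          - (1 - b * Real.sin t ^ 2) / Real.sqrt (1 - b^2 * Real.sin t ^ 2)) from by
    rw [intervalIntegral.integral_sub ((contg ha2).intervalIntegrable _ _)
      ((contg hb2).intervalIntegrable _ _)]; ring]
  have hpos : 0 < ∫ t in (0:ℝ)..(π/2),
      ((1 - a * Real.sin t ^ 2) / Real.sqrt (1 - a^2 * Real.sin t ^ 2)
        - (1 - b * Real.sin t ^ 2) / Real.sqrt (1 - b^2 * Real.sin t ^ 2)) := by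
    apply intervalIntegral.intervalIntegral_pos_of_pos_on
      (((contg ha2).sub (contg hb2)).intervalIntegrable _ _)
    · intro t ht
      have hs : 0 < Real.sin t := Real.sin_pos_of_pos_of_lt_pi ht.1 (by
        have := ht.2; have hπ := Real.pi_pos; linarith)
      have hs1 : Real.sin t ^ 2 ≤ 1 := Real.sin_sq_le_one t
      have := g_strict ha.1 hab hb.2 (by positivity : 0 < Real.sin t ^ 2) hs1
      exact sub_pos.2 this
    · positivity
  linarith

lemma g_bounds {r : ℝ} (h0 : 0 ≤ r) (h1 : r < 1) (t : ℝ) :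
    0 ≤ (1 - r * Real.sin t ^ 2) / Real.sqrt (1 - r^2 * Real.sin t ^ 2) ∧
    (1 - r * Real.sin t ^ 2) / Real.sqrt (1 - r^2 * Real.sin t ^ 2) ≤ 1 := by
  have hr2 : r^2 < 1 := by nlinarith
  have hX := auxX_pos hr2 t
  have hS := auxS_pos hr2 t
  have hu0 : (0:ℝ) ≤ Real.sin t ^ 2 := sq_nonneg _
  have hu1 : Real.sin t ^ 2 ≤ 1 := Real.sin_sq_le_one t
  have hN : (0:ℝ) ≤ 1 - r * Real.sin t ^ 2 := by nlinarith
  constructor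
  · positivity
  · rw [div_le_one hS]
    have hru : r * Real.sin t ^ 2 ≤ 1 := by nlinarith
    refine (Real.le_sqrt hN hX.le).mpr ?_
    nlinarith [mul_nonneg (mul_nonneg h0 hu0) (show (0:ℝ) ≤ 2 - r - r * Real.sin t ^ 2 by linarith)]

lemma ev_Ioo_zero : ∀ᶠ r in 𝓝[>] (0:ℝ), r ∈ Ioo (0:ℝ) 1 := by
  have h1 : Iio (1:ℝ) ∈ 𝓝[>] (0:ℝ) := nhdsWithin_le_nhds (Iio_mem_nhds one_pos)
  filter_upwards [h1, self_mem_nhdsWithin] with r hr1 hr2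
  exact ⟨hr2, hr1⟩

lemma ev_Ioo_one : ∀ᶠ r in 𝓝[<] (1:ℝ), r ∈ Ioo (0:ℝ) 1 := by
  have h1 : Ioi (0:ℝ) ∈ 𝓝[<] (1:ℝ) := nhdsWithin_le_nhds (Ioi_mem_nhds one_pos)
  filter_upwards [h1, self_mem_nhdsWithin] with r hr1 hr2
  exact ⟨hr1, hr2⟩

lemma f2_eq_on {r : ℝ} (hr : r ∈ Ioo (0:ℝ) 1) :
    (EE r - (1 - r) * EK r) / r
      = ∫ t in (0:ℝ)..(π/2), (1 - r * Real.sin t ^ 2) / Real.sqrt (1 - r^2 * Real.sin t ^ 2) := by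
  have hr2 : r^2 < 1 := by nlinarith [hr.1, hr.2]
  rw [f1_eq_g hr2, mul_div_cancel_left₀ _ hr.1.ne']

lemma tendsto_f2_zero :
    Tendsto (fun r => (EE r - (1 - r) * EK r) / r) (𝓝[>] (0:ℝ)) (𝓝 (π/2)) := by
  have key := intervalIntegral.tendsto_integral_filter_of_dominated_convergence
    (μ := volume) (a := (0:ℝ)) (b := π/2)
    (F := fun r t => (1 - r * Real.sin t ^ 2) / Real.sqrt (1 - r^2 * Real.sin t ^ 2))
    (f := fun _ => (1:ℝ)) (l := 𝓝[>] (0:ℝ)) (fun _ => (1:ℝ)) ?meas ?bd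
    intervalIntegrable_const ?lim
  case meas =>
    filter_upwards [ev_Ioo_zero] with r hr
    have hr2 : r^2 < 1 := by nlinarith [hr.1, hr.2]
    exact (contg hr2).aestronglyMeasurable
  case bd =>
    filter_upwards [ev_Ioo_zero] with r hr
    refine ae_of_all _ fun t _ => ?_
    have := g_bounds hr.1.le hr.2 t
    rw [Real.norm_eq_abs, abs_le]
    exact ⟨by linarith [this.1], this.2⟩
  case lim =>
    refine ae_of_all _ fun t _ => ?_
    have hcont : ContinuousAt
        (fun r : ℝ => (1 - r * Real.sin t ^ 2) / Real.sqrt (1 - r^2 * Real.sin t ^ 2)) 0 := by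
      apply ContinuousAt.div (by fun_prop)
      · exact (Real.continuous_sqrt.comp (by fun_prop)).continuousAt
      · simp
    have := hcont.tendsto.mono_left (nhdsWithin_le_nhds (s := Ioi (0:ℝ)))
    simpa using this
  have key2 : Tendsto (fun r => ∫ t in (0:ℝ)..(π/2),
      (1 - r * Real.sin t ^ 2) / Real.sqrt (1 - r^2 * Real.sin t ^ 2))
      (𝓝[>] (0:ℝ)) (𝓝 (π/2)) := by simpa using key
  refine Tendsto.congr' ?_ key2
  filter_upwards [ev_Ioo_zero] with r hr
  exact (f2_eq_on hr).symm

lemma tendsto_f2_one :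
    Tendsto (fun r => (EE r - (1 - r) * EK r) / r) (𝓝[<] (1:ℝ)) (𝓝 1) := by
  have key := intervalIntegral.tendsto_integral_filter_of_dominated_convergence
    (μ := volume) (a := (0:ℝ)) (b := π/2)
    (F := fun r t => (1 - r * Real.sin t ^ 2) / Real.sqrt (1 - r^2 * Real.sin t ^ 2))
    (f := fun t => Real.cos t) (l := 𝓝[<] (1:ℝ)) (fun _ => (1:ℝ)) ?meas ?bd
    intervalIntegrable_const ?lim
  case meas =>
    filter_upwards [ev_Ioo_one] with r hr
    have hr2 : r^2 < 1 := by nlinarith [hr.1, hr.2]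
    exact (contg hr2).aestronglyMeasurable
  case bd =>
    filter_upwards [ev_Ioo_one] with r hr
    refine ae_of_all _ fun t _ => ?_
    have := g_bounds hr.1.le hr.2 t
    rw [Real.norm_eq_abs, abs_le]
    exact ⟨by linarith [this.1], this.2⟩
  case lim =>
    have hae : ∀ᵐ t : ℝ, t ≠ π/2 := by
      rw [MeasureTheory.ae_iff]
      have : {t : ℝ | ¬ t ≠ π/2} = {π/2} := by ext t; simp
      rw [this]
      exact measure_singleton _
    filter_upwards [hae] with t ht hti
    have htmem : t ∈ Ioc (0:ℝ) (π/2) := by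
      rwa [Set.uIoc_of_le (by positivity : (0:ℝ) ≤ π/2)] at hti
    have hlt : t < π/2 := lt_of_le_of_ne htmem.2 ht
    have hcos : 0 < Real.cos t := Real.cos_pos_of_mem_Ioo
      ⟨by linarith [htmem.1, Real.pi_pos], hlt⟩
    have hs2 : Real.sin t ^ 2 < 1 := by
      have := Real.sin_sq_add_cos_sq t
      nlinarith
    have hXne : (0:ℝ) < 1 - 1^2 * Real.sin t ^ 2 := by nlinarith
    have hcont : ContinuousAt
        (fun r : ℝ => (1 - r * Real.sin t ^ 2) / Real.sqrt (1 - r^2 * Real.sin t ^ 2)) 1 := by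
      apply ContinuousAt.div (by fun_prop)
      · exact (Real.continuous_sqrt.comp (by fun_prop)).continuousAt
      · exact (Real.sqrt_pos.2 hXne).ne'
    have hval : (1 - 1 * Real.sin t ^ 2) / Real.sqrt (1 - 1^2 * Real.sin t ^ 2)
        = Real.cos t := by
      rw [one_pow, one_mul,
        show (1:ℝ) - Real.sin t ^ 2 = Real.cos t ^ 2 from by
          have := Real.sin_sq_add_cos_sq t; linarith,
        Real.sqrt_sq hcos.le, sq, mul_div_assoc, div_self hcos.ne', mul_one]
    have := hcont.tendsto.mono_left (nhdsWithin_le_nhds (s := Iio (1:ℝ)))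
    rw [hval] at this
    exact this
  have key2 : Tendsto (fun r => ∫ t in (0:ℝ)..(π/2),
      (1 - r * Real.sin t ^ 2) / Real.sqrt (1 - r^2 * Real.sin t ^ 2))
      (𝓝[<] (1:ℝ)) (𝓝 1) := by
    have : (∫ t in (0:ℝ)..(π/2), Real.cos t) = 1 := by simp
    rwa [this] at key
  refine Tendsto.congr' ?_ key2
  filter_upwards [ev_Ioo_one] with r hr
  exact (f2_eq_on hr).symm

lemma tendsto_f1_zero :
    Tendsto (fun r => EE r - (1 - r) * EK r) (𝓝[>] (0:ℝ)) (𝓝 0) := by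
  have hid : Tendsto (fun r : ℝ => r) (𝓝[>] (0:ℝ)) (𝓝 0) :=
    tendsto_id.mono_right nhdsWithin_le_nhds
  have := tendsto_f2_zero.mul hid
  rw [mul_zero] at this
  refine Tendsto.congr' ?_ this
  filter_upwards [ev_Ioo_zero] with r hr
  exact div_mul_cancel₀ _ hr.1.ne'

lemma tendsto_f1_one :
    Tendsto (fun r => EE r - (1 - r) * EK r) (𝓝[<] (1:ℝ)) (𝓝 1) := by
  have hid : Tendsto (fun r : ℝ => r) (𝓝[<] (1:ℝ)) (𝓝 1) :=
    tendsto_id.mono_right nhdsWithin_le_nhds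
  have := tendsto_f2_one.mul hid
  rw [mul_one] at this
  refine Tendsto.congr' ?_ this
  filter_upwards [ev_Ioo_one] with r hr
  exact div_mul_cancel₀ _ hr.1.ne'

theorem f1_f2_properties :
    StrictAntiOn (fun r => (EE r - (1 - r) * EK r) / r) (Ioo (0:ℝ) 1) ∧
    Tendsto (fun r => (EE r - (1 - r) * EK r) / r)
      (nhdsWithin 0 (Ioi (0:ℝ))) (nhds (π / 2)) ∧
    Tendsto (fun r => (EE r - (1 - r) * EK r) / r)
      (nhdsWithin 1 (Iio (1:ℝ))) (nhds 1) ∧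
    StrictMonoOn (fun r => EE r - (1 - r) * EK r) (Ioo (0:ℝ) 1) ∧
    ConcaveOn ℝ (Ioo (0:ℝ) 1) (fun r => EE r - (1 - r) * EK r) ∧
    Tendsto (fun r => EE r - (1 - r) * EK r)
      (nhdsWithin 0 (Ioi (0:ℝ))) (nhds 0) ∧
    Tendsto (fun r => EE r - (1 - r) * EK r)
      (nhdsWithin 1 (Iio (1:ℝ))) (nhds 1) :=
  ⟨f2_strictAnti, tendsto_f2_zero, tendsto_f2_one, f1_strictMono, f1_concave,
    tendsto_f1_zero, tendsto_f1_one⟩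
end
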